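/- Let x ∈ ι(Ξ) satisfy the crossing property, i.e., inf_{0≤s≤h} (x_{τ(x)+s} − x_{τ(x)}) < 0 for all h > 0, where τ(x) := inf{s ≥ 0 : x_s ≤ 0}. Then for any sequence (x^n)_{n≥1} ⊂ ι(Ξ) converging to x in the Skorokhod M1 topology, one has λ_t(x^n) → λ_t(x) for all t ≥ 0 in a co-countable subset of [0,∞), where λ_t(x) := 1{τ(x) ≤ t}. -/

import Mathlib

open MeasureTheory ProbabilityTheory Filter Set
open scoped ENNReal NNReal Classical

noncomputable section

/-- The first hitting time of `(-∞, 0]` by the path `x` after time `0`,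
with value `∞` if the path never hits `(-∞, 0]`. -/
def hitTime (x : ℝ → ℝ) : ℝ≥0∞ :=
  ⨅ s ∈ {s : ℝ | 0 ≤ s ∧ x s ≤ 0}, ENNReal.ofReal s

/-- Membership in the set `𝕄` of càdlàg non-decreasing functions `ℓ : [-1, ∞) → ℝ`
(encoded as functions on `ℝ`) which vanish on `[-1, 0)` and satisfy `lim_{t → ∞} ℓ t ≤ 1`
(equivalently, `ℓ ≤ 1` everywhere, by monotonicity). -/
structure MemM (ℓ : ℝ → ℝ) : Prop where
  zero_on_neg : ∀ t : ℝ, -1 ≤ t → t < 0 → ℓ t = 0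
  mono : MonotoneOn ℓ (Set.Ici (-1 : ℝ))
  right_cont : ∀ t : ℝ, -1 ≤ t → ContinuousWithinAt ℓ (Set.Ici t) t
  le_one : ∀ t : ℝ, -1 ≤ t → ℓ t ≤ 1

/-- The Lévy distance `d` on `𝕄`. -/
def levyDist (ℓ ℓ' : ℝ → ℝ) : ℝ :=
  sInf {ε : ℝ | 0 < ε ∧ ∀ t : ℝ, 0 ≤ t → ℓ' t ≤ ℓ (t + ε) + ε ∧ ℓ (t - ε) - ε ≤ ℓ' t}

/-- The path `ℓ` stopped at time `t`. -/
def stopAt (ℓ : ℝ → ℝ) (t : ℝ) : ℝ → ℝ := fun s => ℓ (min t s)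

/-- The metric `d̂(ℓ, ℓ') = ∫₀^∞ e^{-s} (d(ℓ_{s∧·}, ℓ'_{s∧·}) ∧ 1) ds` on `𝕄`. -/
def dHat (ℓ ℓ' : ℝ → ℝ) : ℝ :=
  ∫ s in Set.Ioi (0 : ℝ), Real.exp (-s) * min (levyDist (stopAt ℓ s) (stopAt ℓ' s)) 1

/-- A process `B : ℝ → Ω → ℝ` (considered for times `t ≥ 0`) is a standard Brownian motion
under `P`: it starts at `0`, has a.s. continuous paths, independent increments, and Gaussian
increments `B t - B s ~ N(0, t - s)`. -/
structure IsStandardBM {Ω : Type*} [MeasurableSpace Ω] (P : Measure Ω) (B : ℝ → Ω → ℝ) :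
    Prop where
  meas : ∀ t : ℝ, Measurable (B t)
  init : ∀ᵐ ω ∂P, B 0 ω = 0
  cont : ∀ᵐ ω ∂P, ContinuousOn (fun t => B t ω) (Set.Ici (0 : ℝ))
  incr_law : ∀ s t : ℝ, 0 ≤ s → s ≤ t →
    P.map (fun ω => B t ω - B s ω) = gaussianReal 0 (Real.toNNReal (t - s))
  indep_incr : ∀ (n : ℕ) (τ : Fin (n + 1) → ℝ), Monotone τ → (∀ i, 0 ≤ τ i) →
    iIndepFun
      (fun i : Fin n => fun ω => B (τ i.succ) ω - B (τ i.castSucc) ω) P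

/-- The filtration generated by the family of Brownian motions `B i`, evaluated at time `t`. -/
def bmFiltration {Ω ι : Type*} [MeasurableSpace Ω] (B : ι → ℝ → Ω → ℝ) (t : ℝ) :
    MeasurableSpace Ω :=
  ⨆ (i : ι) (s : ℝ) (_ : 0 ≤ s) (_ : s ≤ t), MeasurableSpace.comap (B i s) inferInstance

/-- Set-up of the `N`-particle system: i.i.d. initial conditions `Z i` with common law `θ`
(supported on `[0,∞)`), independent standard Brownian motions `B i`, with the pairs
`(Z i, B i)` mutually independent and `Z i` independent of `B i`. -/
structure ParticleSetup (N : ℕ) {Ω : Type*} [MeasurableSpace Ω] (P : Measure Ω)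
    (θ : Measure ℝ) (Z : Fin N → Ω → ℝ) (B : Fin N → ℝ → Ω → ℝ) : Prop where
  isProb : IsProbabilityMeasure P
  z_meas : ∀ i, Measurable (Z i)
  z_law : ∀ i, P.map (Z i) = θ
  z_nonneg : ∀ i, ∀ᵐ ω ∂P, 0 ≤ Z i ω
  bm : ∀ i, IsStandardBM P (B i)
  indep_pairs : iIndepFun
    (fun i => fun ω => (Z i ω, fun t => B i t ω)) P
  indep_zb : ∀ i, IndepFun (Z i) (fun ω => (fun t => B i t ω) : Ω → ℝ → ℝ) P

/-- `(X, L)` is a solution of the interacting particle system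
`X^i_t = Z^i + β t + B^i_t − G(L_t)`, `L_t = (1/N) ∑_i 1{τ_i ≤ t}`. -/
structure IsParticleSolution (N : ℕ) (β : ℝ) (G : ℝ → ℝ) {Ω : Type*} [MeasurableSpace Ω]
    (P : Measure Ω) (Z : Fin N → Ω → ℝ) (B : Fin N → ℝ → Ω → ℝ)
    (X : Fin N → ℝ → Ω → ℝ) (L : Ω → ℝ → ℝ) : Prop where
  memM : ∀ᵐ ω ∂P, MemM (L ω)
  adapted : ∀ t : ℝ, 0 ≤ t → Measurable[bmFiltration B t] (fun ω => L ω t)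
  eqX : ∀ᵐ ω ∂P, ∀ i, ∀ t : ℝ, 0 ≤ t →
    X i t ω = Z i ω + β * t + B i t ω - G (L ω t)
  eqL : ∀ᵐ ω ∂P, ∀ t : ℝ, 0 ≤ t →
    L ω t = (N : ℝ)⁻¹ *
      (Finset.univ.filter fun i : Fin N =>
        hitTime (fun s => X i s ω) ≤ ENNReal.ofReal t).card

/-- Set-up for the McKean–Vlasov equation: an initial condition `Z ≥ 0` with law `θ` and an
independent standard Brownian motion `B`. -/
structure MVSetup {Ω : Type*} [MeasurableSpace Ω] (P : Measure Ω) (θ : Measure ℝ)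
    (Z : Ω → ℝ) (B : ℝ → Ω → ℝ) : Prop where
  isProb : IsProbabilityMeasure P
  z_meas : Measurable Z
  z_law : P.map Z = θ
  z_nonneg : ∀ᵐ ω ∂P, 0 ≤ Z ω
  bm : IsStandardBM P B
  indep : IndepFun Z (fun ω => (fun t => B t ω) : Ω → ℝ → ℝ) P

/-- `(X, Λ)` is a solution of the McKean–Vlasov equation
`X_t = Z + β t + B_t − G(Λ_t)`, `Λ_t = P(τ ≤ t)` with `τ = inf{t ≥ 0 : X_t ≤ 0}`. -/
structure IsMVSolution (β : ℝ) (G : ℝ → ℝ) {Ω : Type*} [MeasurableSpace Ω] (P : Measure Ω)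
    (Z : Ω → ℝ) (B : ℝ → Ω → ℝ) (X : ℝ → Ω → ℝ) (Λ : ℝ → ℝ) : Prop where
  memM : MemM Λ
  eqX : ∀ᵐ ω ∂P, ∀ t : ℝ, 0 ≤ t → X t ω = Z ω + β * t + B t ω - G (Λ t)
  eqΛ : ∀ t : ℝ, 0 ≤ t →
    Λ t = (P {ω | hitTime (fun s => X s ω) ≤ ENNReal.ofReal t}).toReal


/-- The left-limit value used in the completed graph of a càdlàg path on `[a, ∞)`
(at the left endpoint `a` we use the value itself). -/
def leftVal (a : ℝ) (x : ℝ → ℝ) (t : ℝ) : ℝ :=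
  if t = a then x a else Function.leftLim x t

/-- The completed graph of a càdlàg path `x` over `[a, b]`: the graph together with the
vertical segments joining `x(t-)` and `x(t)` at jump times. -/
def cGraph (a b : ℝ) (x : ℝ → ℝ) : Set (ℝ × ℝ) :=
  {p | p.2 ∈ Set.Icc a b ∧ p.1 ∈ segment ℝ (leftVal a x p.2) (x p.2)}

/-- The (M1) order on the completed graph: points are compared first by time, and within a
jump segment by distance to the left-limit value. -/
def graphLE (a : ℝ) (x : ℝ → ℝ) (p q : ℝ × ℝ) : Prop :=
  p.2 < q.2 ∨ (p.2 = q.2 ∧ |p.1 - leftVal a x p.2| ≤ |q.1 - leftVal a x q.2|)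

/-- `(u, r)` is a parametric representation of the completed graph of `x` over `[a, b]`:
a continuous non-decreasing (for the graph order) map from `[0,1]` onto the completed graph. -/
structure IsParamRep (a b : ℝ) (x : ℝ → ℝ) (u r : ℝ → ℝ) : Prop where
  cont_u : ContinuousOn u (Set.Icc 0 1)
  cont_r : ContinuousOn r (Set.Icc 0 1)
  mono : ∀ s s' : ℝ, s ∈ Set.Icc (0 : ℝ) 1 → s' ∈ Set.Icc (0 : ℝ) 1 → s ≤ s' →
    graphLE a x (u s, r s) (u s', r s')
  surj : (fun s => (u s, r s)) '' Set.Icc (0 : ℝ) 1 = cGraph a b x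

/-- The Skorokhod M1 distance between càdlàg paths restricted to `[a, b]`. -/
def m1DistOn (a b : ℝ) (x y : ℝ → ℝ) : ℝ :=
  sInf {c : ℝ | ∃ u₁ r₁ u₂ r₂ : ℝ → ℝ,
    IsParamRep a b x u₁ r₁ ∧ IsParamRep a b y u₂ r₂ ∧
    ∀ s ∈ Set.Icc (0 : ℝ) 1, |u₁ s - u₂ s| ≤ c ∧ |r₁ s - r₂ s| ≤ c}

/-- A metric `d_m` for the Skorokhod M1 topology on càdlàg paths on `[-1, ∞)`. -/
def m1Dist (x y : ℝ → ℝ) : ℝ :=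
  ∫ t in Set.Ioi (0 : ℝ), Real.exp (-t) * min (m1DistOn (-1) t x y) 1

/-- The crossing property: the path strictly crosses `0` right after its hitting time
(`inf_{0 ≤ s ≤ h} (x_{τ+s} − x_τ) < 0` for all `h > 0`, whenever `τ = hitTime x` is finite). -/
def CrossingProp (x : ℝ → ℝ) : Prop :=
  hitTime x ≠ ⊤ → ∀ h : ℝ, 0 < h →
    ∃ s ∈ Set.Icc (0 : ℝ) h, x ((hitTime x).toReal + s) - x ((hitTime x).toReal) < 0

/-- The functional `λ_t(x) = 1{τ(x) ≤ t}`. -/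
def lamT (t : ℝ) (x : ℝ → ℝ) : ℝ :=
  if hitTime x ≤ ENNReal.ofReal t then 1 else 0

/-! ### Auxiliary development for stmt11 -/

section Aux

/-- clamp to `[0,1]` -/
def c01 (σ : ℝ) : ℝ := max 0 (min σ 1)

lemma c01_mem (σ : ℝ) : c01 σ ∈ Set.Icc (0:ℝ) 1 :=
  ⟨le_max_left _ _, max_le (by norm_num) (min_le_right _ _)⟩

lemma c01_eq {σ : ℝ} (h0 : 0 ≤ σ) (h1 : σ ≤ 1) : c01 σ = σ := by
  unfold c01; rw [min_eq_left h1, max_eq_right h0]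

lemma continuous_c01 : Continuous c01 :=
  continuous_const.max (continuous_id.min continuous_const)

lemma segment_real_iff {p q z : ℝ} : z ∈ segment ℝ p q ↔ min p q ≤ z ∧ z ≤ max p q := by
  rw [segment_eq_uIcc, Set.uIcc, Set.mem_Icc]

lemma segment_abs_le {p q z : ℝ} (h : z ∈ segment ℝ p q) : |z - p| ≤ |q - p| := by
  rw [segment_real_iff] at h
  rcases le_total p q with hpq | hpq
  · rw [min_eq_left hpq, max_eq_right hpq] at h
    rw [abs_of_nonneg (by linarith [h.1]), abs_of_nonneg (by linarith)]; linarith [h.2]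
  · rw [min_eq_right hpq, max_eq_left hpq] at h
    rw [abs_of_nonpos (by linarith [h.2]), abs_of_nonpos (by linarith)]; linarith [h.1]

/-- Data witnessing that `x = f - M` on `[-1,∞)` with `f` continuous and `M` monotone,
right-continuous, nonnegative, vanishing for negative times. -/
structure NiceData (x : ℝ → ℝ) where
  f : ℝ → ℝ
  M : ℝ → ℝ
  hf : ContinuousOn f (Set.Ici (-1 : ℝ))
  hM : Monotone M
  hMrc : ∀ s : ℝ, ContinuousWithinAt M (Set.Ici s) s
  hM0 : ∀ s : ℝ, s < 0 → M s = 0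
  hMnn : ∀ s : ℝ, 0 ≤ M s
  hfx : ∀ s : ℝ, -1 ≤ s → x s = f s - M s

namespace NiceData

lemma xrc {x : ℝ → ℝ} (nd : NiceData x) {t : ℝ} (ht : -1 ≤ t) : ContinuousWithinAt x (Set.Ici t) t := by
  have h1 : ContinuousWithinAt nd.f (Set.Ici t) t := (nd.hf t ht).mono (Set.Ici_subset_Ici.2 ht)
  exact (h1.sub (nd.hMrc t)).congr (fun u hu => nd.hfx u (le_trans ht hu)) (nd.hfx t ht)

lemma tendsto_left {x : ℝ → ℝ} (nd : NiceData x) {t : ℝ} (ht : -1 < t) :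
    Filter.Tendsto x (nhdsWithin t (Set.Iio t))
      (nhds (nd.f t - Function.leftLim nd.M t)) := by
  have hIoo : Set.Ioo (-1 : ℝ) t ∈ nhdsWithin t (Set.Iio t) :=
    Ioo_mem_nhdsLT_of_mem ⟨ht, le_rfl⟩
  have hf' : Filter.Tendsto nd.f (nhdsWithin t (Set.Iio t)) (nhds (nd.f t)) := by
    refine (nd.hf t ht.le).tendsto.mono_left ?_
    rw [← nhdsWithin_Ioo_eq_nhdsLT ht]
    exact nhdsWithin_mono _ (fun u hu => le_of_lt hu.1)
  refine (hf'.sub (nd.hM.tendsto_leftLim t)).congr' ?_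
  filter_upwards [hIoo] with u hu
  exact (nd.hfx u hu.1.le).symm

lemma leftLim_x {x : ℝ → ℝ} (nd : NiceData x) {t : ℝ} (ht : -1 < t) :
    Function.leftLim x t = nd.f t - Function.leftLim nd.M t :=
  leftLim_eq_of_tendsto (nd.tendsto_left ht)

lemma le_leftVal {x : ℝ → ℝ} (nd : NiceData x) {a t : ℝ} (ha : -1 ≤ a) (hat : a ≤ t) : x t ≤ leftVal a x t := by
  unfold leftVal
  split_ifs with h
  · exact le_of_eq (by rw [h])
  · have ht' : -1 < t := lt_of_le_of_lt ha (lt_of_le_of_ne hat (Ne.symm h))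
    rw [nd.leftLim_x ht']
    have h1 := nd.hM.leftLim_le (le_refl t)
    have h2 := nd.hfx t ht'.le
    linarith

lemma segment_ge {x : ℝ → ℝ} (nd : NiceData x) {a t : ℝ} (ha : -1 ≤ a) (hat : a ≤ t) {p : ℝ}
    (hp : p ∈ segment ℝ (leftVal a x t) (x t)) : x t ≤ p := by
  rw [segment_real_iff] at hp
  have hm : min (leftVal a x t) (x t) = x t := min_eq_right (nd.le_leftVal ha hat)
  rw [hm] at hp; exact hp.1

end NiceData

lemma hitTime_le' {x : ℝ → ℝ} {s : ℝ} (h0 : 0 ≤ s) (hs : x s ≤ 0) :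
    hitTime x ≤ ENNReal.ofReal s :=
  iInf₂_le s ⟨h0, hs⟩

lemma hitTime_exists {x : ℝ → ℝ} {t : ℝ} (ht : 0 ≤ t) (h : hitTime x ≤ ENNReal.ofReal t)
    {ε : ℝ} (hε : 0 < ε) : ∃ s, 0 ≤ s ∧ x s ≤ 0 ∧ s ≤ t + ε := by
  have hlt : hitTime x < ENNReal.ofReal (t + ε) :=
    lt_of_le_of_lt h (by rw [ENNReal.ofReal_lt_ofReal_iff (by linarith)]; linarith)
  rw [hitTime, iInf_lt_iff] at hlt
  obtain ⟨s, hs⟩ := hlt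
  rw [iInf_lt_iff] at hs
  obtain ⟨hmem, hlt2⟩ := hs
  refine ⟨s, hmem.1, hmem.2, ?_⟩
  have h3 : s < t + ε := by
    have := hlt2.trans_le le_rfl
    rw [ENNReal.ofReal_lt_ofReal_iff (by linarith)] at this
    exact this
  linarith

lemma pos_of_lt_hitTime {x : ℝ → ℝ} {s : ℝ} (h0 : 0 ≤ s) (h : ENNReal.ofReal s < hitTime x) :
    0 < x s := by
  by_contra hc
  exact absurd h (not_lt.2 (hitTime_le' h0 (not_lt.1 hc)))

lemma NiceData.x_hit_nonpos {x : ℝ → ℝ} (nd : NiceData x) (hfin : hitTime x ≠ ⊤) :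
    x (hitTime x).toReal ≤ 0 := by
  set τ := (hitTime x).toReal with hτdef
  have hτ0 : (0:ℝ) ≤ τ := ENNReal.toReal_nonneg
  have h2 : hitTime x = ENNReal.ofReal τ := (ENNReal.ofReal_toReal hfin).symm
  by_contra hc
  push_neg at hc
  have hrc := nd.xrc (by linarith : (-1:ℝ) ≤ τ)
  rw [Metric.continuousWithinAt_iff] at hrc
  obtain ⟨δ, hδ, hball⟩ := hrc (x τ) hc
  have key : ∀ s, 0 ≤ s → x s ≤ 0 → τ + δ/2 ≤ s := by
    intro s hs hxs
    by_contra hlt; push_neg at hlt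
    rcases lt_or_ge s τ with h1 | h1
    · have hle : hitTime x ≤ ENNReal.ofReal s := hitTime_le' hs hxs
      rw [h2] at hle
      have := (ENNReal.ofReal_le_ofReal_iff hs).1 hle
      linarith
    · have hdist : dist s τ < δ := by
        rw [Real.dist_eq, abs_of_nonneg (by linarith)]; linarith
      have hb := hball h1 hdist
      rw [Real.dist_eq] at hb
      rcases abs_lt.1 hb with ⟨hb1, _⟩
      linarith
  have hge : ENNReal.ofReal (τ + δ/2) ≤ hitTime x := by
    rw [hitTime]
    exact le_iInf₂ fun s hs => ENNReal.ofReal_le_ofReal (key s hs.1 hs.2)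
  rw [h2] at hge
  have := (ENNReal.ofReal_le_ofReal_iff hτ0).1 hge
  linarith

end Aux

section Chunk2

lemma NiceData.exists_pos_lb {x : ℝ → ℝ} (nd : NiceData x) {a b : ℝ} (ha : -1 ≤ a)
    (hab : a ≤ b) (hpos : ∀ s ∈ Set.Icc a b, 0 < x s) :
    ∃ δ > 0, ∀ s ∈ Set.Icc a b, δ ≤ x s := by
  have key : ∀ s ∈ Set.Icc a b, ∃ ρ > 0, ∀ u ∈ Set.Icc a b, |u - s| < ρ → x s / 2 ≤ x u := by
    intro s hs
    have hs1 : -1 ≤ s := ha.trans hs.1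
    have hxs := hpos s hs
    have hrc := nd.xrc hs1
    rw [Metric.continuousWithinAt_iff] at hrc
    obtain ⟨ρ₁, hρ₁, h₁⟩ := hrc (x s / 2) (by linarith)
    have hfc := nd.hf s hs1
    rw [Metric.continuousWithinAt_iff] at hfc
    obtain ⟨ρ₂, hρ₂, h₂⟩ := hfc (x s / 2) (by linarith)
    refine ⟨min ρ₁ ρ₂, lt_min hρ₁ hρ₂, ?_⟩
    intro u hu hdist
    rcases le_total s u with hsu | hsu
    · have hd : dist u s < ρ₁ := by
        rw [Real.dist_eq]; exact hdist.trans_le (min_le_left _ _)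
      have h3 := h₁ (hsu : u ∈ Set.Ici s) hd
      rw [Real.dist_eq] at h3
      rcases abs_lt.1 h3 with ⟨h4, _⟩
      linarith
    · have hu1 : -1 ≤ u := ha.trans hu.1
      have hd : dist u s < ρ₂ := by
        rw [Real.dist_eq]; exact hdist.trans_le (min_le_right _ _)
      have h3 := h₂ (hu1 : u ∈ Set.Ici (-1:ℝ)) hd
      rw [Real.dist_eq] at h3
      rcases abs_lt.1 h3 with ⟨h4, _⟩
      have e1 := nd.hfx u hu1
      have e2 := nd.hfx s hs1
      have hMm := nd.hM hsu
      linarith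
  choose! ρ hρ hball using key
  obtain ⟨b', hb'sub, hb'fin, hb'cov⟩ :=
    isCompact_Icc.elim_finite_subcover_image
      (fun s _ => Metric.isOpen_ball (x := s) (ε := ρ s))
      (fun s hs => Set.mem_biUnion hs (Metric.mem_ball_self (hρ s hs)))
  have hane : a ∈ Set.Icc a b := ⟨le_rfl, hab⟩
  obtain ⟨s₀, hs₀b, hs₀mem⟩ := Set.mem_iUnion₂.1 (hb'cov hane)
  have hFne : hb'fin.toFinset.Nonempty := ⟨s₀, hb'fin.mem_toFinset.2 hs₀b⟩
  refine ⟨hb'fin.toFinset.inf' hFne (fun s => x s / 2), ?_, ?_⟩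
  · rw [gt_iff_lt, Finset.lt_inf'_iff]
    intro s hsF
    have := hpos s (hb'sub (hb'fin.mem_toFinset.1 hsF))
    linarith
  · intro u hu
    obtain ⟨s', hs'b, hs'mem⟩ := Set.mem_iUnion₂.1 (hb'cov hu)
    have hd : |u - s'| < ρ s' := by
      rw [← Real.dist_eq]; exact hs'mem
    have h5 := hball s' (hb'sub hs'b) u hu hd
    exact le_trans (Finset.inf'_le _ (hb'fin.mem_toFinset.2 hs'b)) h5

/-! #### The canonical parametric representation -/

def repC (M : ℝ → ℝ) : ℝ → ℝ := fun s => s + M s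

def repR (M : ℝ → ℝ) (a b v : ℝ) : ℝ := sInf {s | s ∈ Set.Icc a b ∧ v ≤ repC M s}

lemma repC_lip {M : ℝ → ℝ} (hM : Monotone M) {s t : ℝ} (h : s ≤ t) :
    repC M s + (t - s) ≤ repC M t := by
  have := hM h; simp only [repC]; linarith

lemma repR_bddBelow {M : ℝ → ℝ} {a b v : ℝ} :
    BddBelow {s | s ∈ Set.Icc a b ∧ v ≤ repC M s} := ⟨a, fun s hs => hs.1.1⟩

lemma repR_mem {M : ℝ → ℝ} (hM : Monotone M)
    (hMrc : ∀ s : ℝ, ContinuousWithinAt M (Set.Ici s) s) {a b v : ℝ} (hab : a ≤ b)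
    (hv : v ∈ Set.Icc (repC M a) (repC M b)) :
    repR M a b v ∈ Set.Icc a b ∧ v ≤ repC M (repR M a b v) := by
  have hbmem : b ∈ {s | s ∈ Set.Icc a b ∧ v ≤ repC M s} := ⟨⟨hab, le_rfl⟩, hv.2⟩
  have hne : {s | s ∈ Set.Icc a b ∧ v ≤ repC M s}.Nonempty := ⟨b, hbmem⟩
  have hmem1 : repR M a b v ∈ Set.Icc a b :=
    ⟨le_csInf hne (fun s hs => hs.1.1), csInf_le repR_bddBelow hbmem⟩
  refine ⟨hmem1, ?_⟩
  by_contra hc; push_neg at hc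
  have hcrc : ContinuousWithinAt (repC M) (Set.Ici (repR M a b v)) (repR M a b v) :=
    continuousWithinAt_id.add (hMrc _)
  rw [Metric.continuousWithinAt_iff] at hcrc
  obtain ⟨δ, hδ, hb2⟩ := hcrc (v - repC M (repR M a b v)) (by linarith)
  obtain ⟨s, hsS, hslt⟩ := Real.lt_sInf_add_pos hne hδ
  have hslt' : s < repR M a b v + δ := hslt
  have hsr : repR M a b v ≤ s := csInf_le repR_bddBelow hsS
  have hdist : dist s (repR M a b v) < δ := by
    rw [Real.dist_eq, abs_of_nonneg (by linarith)]
    linarith [hslt']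
  have h6 := hb2 (hsr : s ∈ Set.Ici (repR M a b v)) hdist
  rw [Real.dist_eq] at h6
  rcases abs_lt.1 h6 with ⟨_, h7⟩
  have := hsS.2
  linarith

lemma repR_lt {M : ℝ → ℝ} {a b v s : ℝ} (hs : s ∈ Set.Icc a b)
    (hlt : s < repR M a b v) : repC M s < v := by
  by_contra hc; push_neg at hc
  have : repR M a b v ≤ s := csInf_le repR_bddBelow ⟨hs, hc⟩
  linarith

lemma repR_mono {M : ℝ → ℝ} {a b v v' : ℝ} (hab : a ≤ b)
    (hv' : v' ≤ repC M b) (hvv : v ≤ v') : repR M a b v ≤ repR M a b v' := by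
  refine csInf_le_csInf repR_bddBelow ?_ ?_
  · exact ⟨b, ⟨⟨hab, le_rfl⟩, hv'⟩⟩
  · intro u hu; exact ⟨hu.1, hvv.trans hu.2⟩

lemma repR_lip {M : ℝ → ℝ} (hM : Monotone M)
    (hMrc : ∀ s : ℝ, ContinuousWithinAt M (Set.Ici s) s) {a b v v' : ℝ} (hab : a ≤ b)
    (hv : v ∈ Set.Icc (repC M a) (repC M b)) (hv' : v' ∈ Set.Icc (repC M a) (repC M b))
    (hvv : v ≤ v') : repR M a b v' ≤ repR M a b v + (v' - v) := by
  have hrmem := repR_mem hM hMrc hab hv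
  rcases le_or_gt b (repR M a b v + (v' - v)) with h | h
  · exact le_trans (repR_mem hM hMrc hab hv').1.2 h
  · refine csInf_le repR_bddBelow ?_
    constructor
    · exact ⟨le_trans hrmem.1.1 (by linarith), h.le⟩
    · have h8 := repC_lip hM (show repR M a b v ≤ repR M a b v + (v' - v) by linarith)
      linarith [hrmem.2]

lemma repR_leftLim {M : ℝ → ℝ} (hM : Monotone M)
    (hMrc : ∀ s : ℝ, ContinuousWithinAt M (Set.Ici s) s) {a b v : ℝ} (hab : a ≤ b)
    (hv : v ∈ Set.Icc (repC M a) (repC M b)) (hgt : a < repR M a b v) :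
    Function.leftLim M (repR M a b v) ≤ v - repR M a b v := by
  have hrle : repR M a b v ≤ b := (repR_mem hM hMrc hab hv).1.2
  have hev : Set.Ioo a (repR M a b v) ∈ nhdsWithin (repR M a b v) (Set.Iio (repR M a b v)) :=
    Ioo_mem_nhdsLT_of_mem ⟨hgt, le_rfl⟩
  have htd2 : Filter.Tendsto (fun s : ℝ => v - s)
      (nhdsWithin (repR M a b v) (Set.Iio (repR M a b v))) (nhds (v - repR M a b v)) :=
    ((continuous_const.sub continuous_id).tendsto _).mono_left nhdsWithin_le_nhds
  refine le_of_tendsto_of_tendsto (hM.tendsto_leftLim _) htd2 ?_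
  filter_upwards [hev] with s hs
  have h9 : repC M s < v := repR_lt ⟨hs.1.le, hs.2.le.trans hrle⟩ hs.2
  simp only [repC] at h9
  show M s ≤ v - s
  linarith

lemma repR_left_endpoint {M : ℝ → ℝ} (hM : Monotone M)
    (hMrc : ∀ s : ℝ, ContinuousWithinAt M (Set.Ici s) s) {a b : ℝ} (hab : a ≤ b) :
    repR M a b (repC M a) = a := by
  have hmem := repR_mem hM hMrc hab ⟨le_rfl, (by linarith [repC_lip hM hab] : repC M a ≤ repC M b)⟩
  have h1 : repR M a b (repC M a) ≤ a := csInf_le repR_bddBelow ⟨⟨le_rfl, hab⟩, le_rfl⟩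
  exact le_antisymm h1 hmem.1.1

lemma repR_right_endpoint {M : ℝ → ℝ} (hM : Monotone M) {a b : ℝ} (hab : a ≤ b) :
    repR M a b (repC M b) = b := by
  have h1 : repR M a b (repC M b) ≤ b := csInf_le repR_bddBelow ⟨⟨hab, le_rfl⟩, le_rfl⟩
  refine le_antisymm h1 (le_csInf ⟨b, ⟨⟨hab, le_rfl⟩, le_rfl⟩⟩ ?_)
  intro s hs
  by_contra hc; push_neg at hc
  have := repC_lip hM hc.le
  have := hs.2
  linarith

end Chunk2

section Chunk3

theorem NiceData.exists_rep {x : ℝ → ℝ} (nd : NiceData x) {a b : ℝ} (ha : -1 ≤ a)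
    (hab : a < b) :
    ∃ u r : ℝ → ℝ, IsParamRep a b x u r ∧ u 0 = x a ∧ r 0 = a ∧ u 1 = x b ∧ r 1 = b := by
  obtain ⟨f, M, hf, hM, hMrc, hM0, hMnn, hfx⟩ := nd
  have hfcont : ContinuousOn f (Set.Ici (-1:ℝ)) := hf
  -- reconstruct the bundle for lemmas that need it
  set nd' : NiceData x := ⟨f, M, hf, hM, hMrc, hM0, hMnn, hfx⟩ with hnd'
  have hcab : repC M a + (b - a) ≤ repC M b := repC_lip hM hab.le
  have hcab' : repC M a < repC M b := by linarith
  set ca := repC M a with hca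
  set cb := repC M b with hcb
  set Lfun : ℝ → ℝ := fun t => if t = a then M a else Function.leftLim M t with hLfun
  set φ : ℝ → ℝ := fun σ => ca + σ * (cb - ca) with hφ
  set R : ℝ → ℝ := fun σ => repR M a b (φ σ) with hRdef
  set U : ℝ → ℝ := fun σ => f (R σ) - (φ σ - R σ) with hUdef
  have hca' : ca = a + M a := rfl
  have hcb' : cb = b + M b := rfl
  have hφmem : ∀ σ ∈ Set.Icc (0:ℝ) 1, φ σ ∈ Set.Icc ca cb := by
    intro σ hσ
    constructor
    · show ca ≤ ca + σ * (cb - ca); nlinarith [hσ.1, hσ.2]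
    · show ca + σ * (cb - ca) ≤ cb; nlinarith [hσ.1, hσ.2]
  have hφmono : ∀ {σ σ' : ℝ}, σ ≤ σ' → φ σ ≤ φ σ' := by
    intro σ σ' h; show ca + σ * (cb - ca) ≤ ca + σ' * (cb - ca); nlinarith
  have hRmem : ∀ σ ∈ Set.Icc (0:ℝ) 1, R σ ∈ Set.Icc a b :=
    fun σ hσ => (repR_mem hM hMrc hab.le (hφmem σ hσ)).1
  have hupper : ∀ σ ∈ Set.Icc (0:ℝ) 1, φ σ - R σ ≤ M (R σ) := by
    intro σ hσ
    have h1 := (repR_mem hM hMrc hab.le (hφmem σ hσ)).2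
    simp only [repC] at h1
    have : φ σ ≤ R σ + M (R σ) := h1
    linarith
  have hlower : ∀ σ ∈ Set.Icc (0:ℝ) 1, Lfun (R σ) ≤ φ σ - R σ := by
    intro σ hσ
    by_cases hc : R σ = a
    · rw [hLfun]; simp only [if_pos hc]
      have h1 := (hφmem σ hσ).1
      rw [hca'] at h1
      rw [hc]
      linarith
    · rw [hLfun]; simp only [if_neg hc]
      exact repR_leftLim hM hMrc hab.le (hφmem σ hσ)
        (lt_of_le_of_ne (hRmem σ hσ).1 (Ne.symm hc))
  have hLle : ∀ t, a ≤ t → Lfun t ≤ M t := by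
    intro t hat
    rw [hLfun]
    by_cases hc : t = a
    · simp only [if_pos hc, hc]; exact le_rfl
    · simp only [if_neg hc]; exact hM.leftLim_le le_rfl
  have hLge : ∀ t, a < t → M a ≤ Lfun t := by
    intro t hat
    rw [hLfun]; simp only [if_neg (ne_of_gt hat)]
    exact hM.le_leftLim hat
  have hlvalgen : ∀ t, a ≤ t → t ≤ b → leftVal a x t = f t - Lfun t := by
    intro t hat htb
    rw [leftVal, hLfun]
    by_cases hc : t = a
    · simp only [if_pos hc]
      rw [hc, hfx a ha]
    · simp only [if_neg hc]
      exact nd'.leftLim_x (lt_of_le_of_lt ha (lt_of_le_of_ne hat (Ne.symm hc)))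
  have hmemseg : ∀ σ ∈ Set.Icc (0:ℝ) 1, U σ ∈ segment ℝ (leftVal a x (R σ)) (x (R σ)) := by
    intro σ hσ
    have hm := hRmem σ hσ
    have hxR : x (R σ) = f (R σ) - M (R σ) := hfx _ (ha.trans hm.1)
    have hlv : leftVal a x (R σ) = f (R σ) - Lfun (R σ) := hlvalgen _ hm.1 hm.2
    have hxlv : x (R σ) ≤ leftVal a x (R σ) := nd'.le_leftVal ha hm.1
    rw [segment_real_iff, min_eq_right hxlv, max_eq_left hxlv]
    constructor
    · show x (R σ) ≤ U σ
      rw [hxR]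
      show f (R σ) - M (R σ) ≤ f (R σ) - (φ σ - R σ)
      linarith [hupper σ hσ]
    · show U σ ≤ leftVal a x (R σ)
      rw [hlv]
      show f (R σ) - (φ σ - R σ) ≤ f (R σ) - Lfun (R σ)
      linarith [hlower σ hσ]
  -- continuity
  have hφcont : Continuous φ := by
    rw [hφ]; exact continuous_const.add (continuous_id.mul continuous_const)
  have hlip : LipschitzOnWith 1 (repR M a b) (Set.Icc ca cb) := by
    rw [lipschitzOnWith_iff_dist_le_mul]
    intro v hv v' hv'
    rw [NNReal.coe_one, one_mul, Real.dist_eq, Real.dist_eq]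
    rcases le_total v v' with h | h
    · have h1 := repR_mono (M := M) hab.le hv'.2 h
      have h2 := repR_lip hM hMrc hab.le hv hv' h
      rw [abs_of_nonpos (by linarith), abs_of_nonpos (by linarith)]
      linarith
    · have h1 := repR_mono (M := M) hab.le hv.2 h
      have h2 := repR_lip hM hMrc hab.le hv' hv h
      rw [abs_of_nonneg (by linarith), abs_of_nonneg (by linarith)]
      linarith
  have hRcont : ContinuousOn R (Set.Icc (0:ℝ) 1) := by
    have := hlip.continuousOn.comp hφcont.continuousOn (fun σ hσ => hφmem σ hσ)
    exact this
  have hUcont : ContinuousOn U (Set.Icc (0:ℝ) 1) := by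
    have h1 : ContinuousOn (fun σ => f (R σ)) (Set.Icc (0:ℝ) 1) :=
      hfcont.comp hRcont (fun σ hσ => ha.trans (hRmem σ hσ).1)
    exact h1.sub (hφcont.continuousOn.sub hRcont)
  -- endpoints
  have hφ0 : φ 0 = ca := by rw [hφ]; ring
  have hφ1 : φ 1 = cb := by rw [hφ]; ring
  have hR0 : R 0 = a := by rw [hRdef]; simp only [hφ0]; exact repR_left_endpoint hM hMrc hab.le
  have hR1 : R 1 = b := by rw [hRdef]; simp only [hφ1]; exact repR_right_endpoint hM hab.le
  have hU0 : U 0 = x a := by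
    rw [hUdef]; simp only [hφ0, hR0]
    rw [hfx a ha, hca']; ring
  have hU1 : U 1 = x b := by
    rw [hUdef]; simp only [hφ1, hR1]
    rw [hfx b (ha.trans hab.le), hcb']; ring
  refine ⟨U, R, ⟨hUcont, hRcont, ?_, ?_⟩, hU0, hR0, hU1, hR1⟩
  · -- monotonicity in the graph order
    intro σ σ' hσ hσ' hle
    have hφle := hφmono hle
    have hRle : R σ ≤ R σ' := repR_mono hab.le (hφmem σ' hσ').2 hφle
    rcases lt_or_eq_of_le hRle with h | h
    · exact Or.inl h
    · refine Or.inr ⟨h, ?_⟩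
      show |U σ - leftVal a x (R σ)| ≤ |U σ' - leftVal a x (R σ')|
      have hm := hRmem σ hσ
      have hm' := hRmem σ' hσ'
      rw [hlvalgen _ hm.1 hm.2, hlvalgen _ hm'.1 hm'.2]
      have e1 : U σ - (f (R σ) - Lfun (R σ)) = Lfun (R σ) - (φ σ - R σ) := by
        show f (R σ) - (φ σ - R σ) - (f (R σ) - Lfun (R σ)) = _; ring
      have e2 : U σ' - (f (R σ') - Lfun (R σ')) = Lfun (R σ') - (φ σ' - R σ') := by
        show f (R σ') - (φ σ' - R σ') - (f (R σ') - Lfun (R σ')) = _; ring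
      rw [e1, e2]
      have hL := hlower σ hσ
      have hL' := hlower σ' hσ'
      rw [abs_of_nonpos (by linarith), abs_of_nonpos (by linarith)]
      rw [← h]
      linarith
  · -- surjectivity
    apply Set.Subset.antisymm
    · rintro p ⟨σ, hσ, rfl⟩
      exact ⟨hRmem σ hσ, hmemseg σ hσ⟩
    · rintro ⟨p1, p2⟩ ⟨hp2, hp1⟩
      have hp2' : (p2 : ℝ) ∈ Set.Icc a b := hp2
      have hxp : x p2 = f p2 - M p2 := hfx p2 (ha.trans hp2'.1)
      have hlv2 : leftVal a x p2 = f p2 - Lfun p2 := hlvalgen _ hp2'.1 hp2'.2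
      have hxlv : x p2 ≤ leftVal a x p2 := nd'.le_leftVal ha hp2'.1
      rw [segment_real_iff, min_eq_right hxlv, max_eq_left hxlv] at hp1
      set vv := f p2 - p1 with hvvdef
      have hvvub : vv ≤ M p2 := by
        have := hp1.1; rw [hxp] at this; rw [hvvdef]; linarith
      have hvvlb : Lfun p2 ≤ vv := by
        have := hp1.2; rw [hlv2] at this; rw [hvvdef]; linarith
      set u := p2 + vv with hudef
      have hu1 : ca ≤ u := by
        rcases eq_or_lt_of_le hp2'.1 with hc | hc
        · have hLeq : Lfun p2 = M a := by
            rw [← hc]; show Lfun a = M a; rw [hLfun]; simp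
          rw [hca', hudef, ← hc]
          rw [hLeq] at hvvlb
          linarith
        · have := hLge p2 hc
          rw [hca', hudef]; linarith
      have hu2 : u ≤ cb := by
        have h1 : repC M p2 ≤ repC M b := by
          rcases eq_or_lt_of_le hp2'.2 with hc | hc
          · rw [hc]
          · linarith [repC_lip hM hc.le]
        simp only [repC] at h1
        rw [hcb', hudef]; linarith
      set σ := (u - ca) / (cb - ca) with hσdef
      have hσmem : σ ∈ Set.Icc (0:ℝ) 1 := by
        constructor
        · exact div_nonneg (by linarith) (by linarith)
        · rw [div_le_one (by linarith)]; linarith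
      have hφσ : φ σ = u := by
        have hne : cb - ca ≠ 0 := by linarith
        rw [hφ]; show ca + (u - ca) / (cb - ca) * (cb - ca) = u
        field_simp
        ring
      have hRσ : R σ = p2 := by
        rw [hRdef]; simp only [hφσ]
        refine le_antisymm (csInf_le repR_bddBelow ⟨hp2', ?_⟩) ?_
        · show u ≤ repC M p2
          simp only [repC]; rw [hudef]; linarith
        · by_contra hcon; push_neg at hcon
          have hrmem := repR_mem hM hMrc hab.le (⟨hu1, hu2⟩ : u ∈ Set.Icc ca cb)
          rcases eq_or_lt_of_le hp2'.1 with hc | hc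
          · rw [← hc] at hcon
            exact absurd hrmem.1.1 (not_le.2 hcon)
          · have hL2 : Lfun p2 = Function.leftLim M p2 := by
              rw [hLfun]; simp only [if_neg (ne_of_gt hc)]
            have h3 : M (repR M a b u) ≤ Function.leftLim M p2 := hM.le_leftLim hcon
            have h4 : repC M (repR M a b u) < u := by
              simp only [repC]
              rw [hudef]
              rw [hL2] at hvvlb
              linarith
            exact absurd hrmem.2 (not_le.2 h4)
      refine ⟨σ, hσmem, ?_⟩
      have hUσ : U σ = p1 := by
        rw [hUdef]; simp only [hφσ, hRσ]
        show f p2 - (u - p2) = p1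
        rw [hudef, hvvdef]; ring
      show (U σ, R σ) = (p1, p2)
      rw [hUσ, hRσ]

end Chunk3

section Chunk4

def m1Set (a b : ℝ) (x y : ℝ → ℝ) : Set ℝ :=
  {c : ℝ | ∃ u₁ r₁ u₂ r₂ : ℝ → ℝ,
    IsParamRep a b x u₁ r₁ ∧ IsParamRep a b y u₂ r₂ ∧
    ∀ s ∈ Set.Icc (0 : ℝ) 1, |u₁ s - u₂ s| ≤ c ∧ |r₁ s - r₂ s| ≤ c}

lemma m1DistOn_eq (a b : ℝ) (x y : ℝ → ℝ) : m1DistOn a b x y = sInf (m1Set a b x y) := rfl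

lemma m1Set_nonneg {a b : ℝ} {x y : ℝ → ℝ} {c : ℝ} (hc : c ∈ m1Set a b x y) : 0 ≤ c := by
  obtain ⟨u₁, r₁, u₂, r₂, _, _, hb⟩ := hc
  exact le_trans (abs_nonneg _) (hb 0 ⟨le_rfl, zero_le_one⟩).1

lemma m1Set_bddBelow (a b : ℝ) (x y : ℝ → ℝ) : BddBelow (m1Set a b x y) :=
  ⟨0, fun _ hc => m1Set_nonneg hc⟩

lemma m1Set_nonempty {x y : ℝ → ℝ} (ndx : NiceData x) (ndy : NiceData y) {b : ℝ}
    (hb : -1 < b) : (m1Set (-1) b x y).Nonempty := by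
  obtain ⟨u₁, r₁, h₁, -, -, -, -⟩ := ndx.exists_rep le_rfl hb
  obtain ⟨u₂, r₂, h₂, -, -, -, -⟩ := ndy.exists_rep le_rfl hb
  obtain ⟨C₁, hC₁⟩ := isCompact_Icc.exists_bound_of_continuousOn (h₁.cont_u.sub h₂.cont_u)
  obtain ⟨C₂, hC₂⟩ := isCompact_Icc.exists_bound_of_continuousOn (h₁.cont_r.sub h₂.cont_r)
  refine ⟨max C₁ C₂, u₁, r₁, u₂, r₂, h₁, h₂, fun s hs => ⟨?_, ?_⟩⟩
  · have := hC₁ s hs; rw [Real.norm_eq_abs] at this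
    exact le_trans this (le_max_left _ _)
  · have := hC₂ s hs; rw [Real.norm_eq_abs] at this
    exact le_trans this (le_max_right _ _)

lemma m1DistOn_ge {x y : ℝ → ℝ} {b ε : ℝ} (hne : (m1Set (-1) b x y).Nonempty)
    (h : ∀ c ∈ m1Set (-1) b x y, ε ≤ c) : ε ≤ m1DistOn (-1) b x y := by
  rw [m1DistOn_eq]; exact le_csInf hne h

lemma m1DistOn_le_of_mem {a b : ℝ} {x y : ℝ → ℝ} {c : ℝ} (hc : c ∈ m1Set a b x y) :
    m1DistOn a b x y ≤ c := by
  rw [m1DistOn_eq]; exact csInf_le (m1Set_bddBelow a b x y) hc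

lemma exists_lt_of_m1DistOn_lt {a b : ℝ} {x y : ℝ → ℝ} {ε : ℝ}
    (hne : (m1Set a b x y).Nonempty) (h : m1DistOn a b x y < ε) :
    ∃ c ∈ m1Set a b x y, c < ε := by
  rw [m1DistOn_eq] at h; exact exists_lt_of_csInf_lt hne h

lemma m1DistOn_nonneg {x y : ℝ → ℝ} (ndx : NiceData x) (ndy : NiceData y) {b : ℝ}
    (hb : -1 < b) : 0 ≤ m1DistOn (-1) b x y :=
  m1DistOn_ge (m1Set_nonempty ndx ndy hb) (fun _ hc => m1Set_nonneg hc)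

lemma cGraph_left_endpoint {y : ℝ → ℝ} {t b : ℝ} {p : ℝ × ℝ} (hp : p ∈ cGraph t b y)
    (hc : p.2 = t) : p.1 = y t := by
  have h2 := hp.2
  rw [hc, leftVal, if_pos rfl] at h2
  rw [segment_real_iff, min_self, max_self] at h2
  exact le_antisymm h2.2 h2.1

lemma leftVal_shift {y : ℝ → ℝ} {t s : ℝ} (hs : s ≠ t) (hs' : s ≠ -1) :
    leftVal t y s = leftVal (-1) y s := by
  rw [leftVal, leftVal, if_neg hs, if_neg hs']

lemma rep_end {x u r : ℝ → ℝ} (nd : NiceData x) {b : ℝ} (hb : -1 ≤ b)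
    (h : IsParamRep (-1) b x u r) : u 1 = x b ∧ r 1 = b := by
  have hxb : ((x b, b) : ℝ × ℝ) ∈ cGraph (-1) b x := ⟨⟨hb, le_rfl⟩, right_mem_segment ℝ _ _⟩
  have himg : ((x b, b) : ℝ × ℝ) ∈ (fun s => (u s, r s)) '' Set.Icc 0 1 := by
    rw [h.surj]; exact hxb
  obtain ⟨σ, hσ, hσeq⟩ := himg
  have h1 : ((u 1, r 1) : ℝ × ℝ) ∈ cGraph (-1) b x := by
    rw [← h.surj]; exact ⟨1, ⟨zero_le_one, le_rfl⟩, rfl⟩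
  have hr1b : r 1 ≤ b := h1.1.2
  have huσ : u σ = x b := congrArg Prod.fst hσeq
  have hrσ : r σ = b := congrArg Prod.snd hσeq
  have hmono := h.mono σ 1 hσ ⟨zero_le_one, le_rfl⟩ hσ.2
  unfold graphLE at hmono
  dsimp only at hmono
  rcases hmono with hlt | ⟨heq, hle⟩
  · rw [hrσ] at hlt; linarith
  · have hr1 : r 1 = b := by rw [← heq, hrσ]
    refine ⟨?_, hr1⟩
    rw [hrσ, huσ, hr1] at hle
    have hu1seg : u 1 ∈ segment ℝ (leftVal (-1) x b) (x b) := by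
      have h3 := h1.2; dsimp only at h3; rwa [hr1] at h3
    have hxlv := nd.le_leftVal (le_refl (-1)) hb
    rw [segment_real_iff, min_eq_right hxlv, max_eq_left hxlv] at hu1seg
    rw [abs_of_nonpos (by linarith), abs_of_nonpos (by linarith)] at hle
    linarith

lemma osc_lemma {x : ℝ → ℝ} (nd : NiceData x) {t : ℝ} (ht : -1 ≤ t) {ε : ℝ} (hε : 0 < ε) :
    ∃ h₀ > 0, ∀ h : ℝ, 0 < h → h ≤ h₀ → ∀ p ∈ cGraph t (t + h) x, |p.1 - x t| ≤ ε := by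
  have hrc := nd.xrc ht
  rw [Metric.continuousWithinAt_iff] at hrc
  obtain ⟨δ, hδ, hball⟩ := hrc ε hε
  refine ⟨δ/2, by linarith, ?_⟩
  intro h hh hhδ p hp
  obtain ⟨hp2, hp1⟩ := hp
  have hs : p.2 ∈ Set.Icc t (t + h) := hp2
  have hvalbd : ∀ u, t ≤ u → u ≤ t + h → |x u - x t| ≤ ε := by
    intro u h1 h2
    have hd : dist u t < δ := by
      rw [Real.dist_eq, abs_of_nonneg (by linarith)]; linarith
    have h3 := hball (h1 : u ∈ Set.Ici t) hd
    rw [Real.dist_eq] at h3; exact h3.le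
  have hxs := hvalbd p.2 hs.1 hs.2
  have hlv : |leftVal t x p.2 - x t| ≤ ε := by
    rw [leftVal]
    by_cases hc : p.2 = t
    · simp only [if_pos hc, hc]
      simpa using hε.le
    · simp only [if_neg hc]
      have hst : t < p.2 := lt_of_le_of_ne hs.1 (Ne.symm hc)
      have hs1 : (-1:ℝ) < p.2 := lt_of_le_of_lt ht hst
      rw [nd.leftLim_x hs1]
      have h2 : Filter.Tendsto (fun u => |x u - x t|) (nhdsWithin p.2 (Set.Iio p.2))
          (nhds (|nd.f p.2 - Function.leftLim nd.M p.2 - x t|)) :=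
        ((nd.tendsto_left hs1).sub_const _).abs
      refine le_of_tendsto h2 ?_
      filter_upwards [Ioo_mem_nhdsLT_of_mem (⟨hst, le_rfl⟩ : p.2 ∈ Set.Ioc t p.2)] with u hu
      exact hvalbd u hu.1.le (by linarith [hu.2, hs.2])
  rw [segment_real_iff] at hp1
  rcases abs_le.1 hlv with ⟨hlv1, hlv2⟩
  rcases abs_le.1 hxs with ⟨hxs1, hxs2⟩
  rw [abs_le]
  constructor
  · have : x t - ε ≤ min (leftVal t x p.2) (x p.2) := le_min (by linarith) (by linarith)
    linarith [hp1.1]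
  · have : max (leftVal t x p.2) (x p.2) ≤ x t + ε := max_le (by linarith) (by linarith)
    linarith [hp1.2]

lemma graphLE_lift {y : ℝ → ℝ} {t b : ℝ} (ht : -1 < t) {p q : ℝ × ℝ}
    (hp : p ∈ cGraph t b y) (hq : q ∈ cGraph t b y) (hle : graphLE t y p q) :
    graphLE (-1) y p q := by
  unfold graphLE at hle ⊢
  rcases hle with h | ⟨heq, habs⟩
  · exact Or.inl h
  · refine Or.inr ⟨heq, ?_⟩
    by_cases hc : p.2 = t
    · have hpt : p.1 = y t := cGraph_left_endpoint hp hc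
      have hqt : q.1 = y t := cGraph_left_endpoint hq (by rw [← heq, hc])
      rw [hpt, hqt, ← heq]
    · have hgt : t < p.2 := lt_of_le_of_ne hp.1.1 (Ne.symm hc)
      have e : leftVal t y p.2 = leftVal (-1) y p.2 :=
        leftVal_shift hc (by intro h2; rw [h2] at hgt; linarith)
      rw [← heq] at habs ⊢
      rw [← e]
      exact habs

lemma cGraph_union {y : ℝ → ℝ} {t b : ℝ} (ht : -1 < t) (htb : t ≤ b) :
    cGraph (-1) b y = cGraph (-1) t y ∪ cGraph t b y := by
  ext p
  constructor
  · rintro ⟨hp2, hp1⟩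
    rcases le_or_gt p.2 t with h | h
    · exact Or.inl ⟨⟨hp2.1, h⟩, hp1⟩
    · refine Or.inr ⟨⟨h.le, hp2.2⟩, ?_⟩
      have e : leftVal t y p.2 = leftVal (-1) y p.2 :=
        leftVal_shift (ne_of_gt h) (by intro h2; rw [h2] at h; linarith)
      rw [e]; exact hp1
  · rintro (⟨hp2, hp1⟩ | ⟨hp2, hp1⟩)
    · exact ⟨⟨hp2.1, hp2.2.trans htb⟩, hp1⟩
    · refine ⟨⟨le_trans (by linarith) hp2.1, hp2.2⟩, ?_⟩
      by_cases hc : p.2 = t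
      · have hpt : p.1 = y t := cGraph_left_endpoint ⟨hp2, hp1⟩ hc
        rw [hc, hpt]
        exact right_mem_segment ℝ _ _
      · have hgt : t < p.2 := lt_of_le_of_ne hp2.1 (Ne.symm hc)
        have e : leftVal t y p.2 = leftVal (-1) y p.2 :=
          leftVal_shift hc (by intro h2; rw [h2] at hgt; linarith)
        rw [← e]; exact hp1

end Chunk4

section Chunk5

lemma glue_rep {y : ℝ → ℝ} {t h : ℝ} (ht : -1 < t) (hh : 0 < h)
    {u r u' r' : ℝ → ℝ} (hrep : IsParamRep (-1) t y u r) (hrep' : IsParamRep t (t+h) y u' r')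
    (hu'0 : u' 0 = y t) (hr'0 : r' 0 = t) (hu1 : u 1 = y t) (hr1 : r 1 = t) :
    IsParamRep (-1) (t+h) y (fun σ => if σ ≤ 1/2 then u (c01 (2*σ)) else u' (c01 (2*σ-1)))
      (fun σ => if σ ≤ 1/2 then r (c01 (2*σ)) else r' (c01 (2*σ-1))) := by
  set U := fun σ : ℝ => if σ ≤ (1:ℝ)/2 then u (c01 (2*σ)) else u' (c01 (2*σ-1)) with hUdef
  set R := fun σ : ℝ => if σ ≤ (1:ℝ)/2 then r (c01 (2*σ)) else r' (c01 (2*σ-1)) with hRdef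
  have hb1 : ∀ σ : ℝ, 0 ≤ σ → σ ≤ 1/2 → U σ = u (2*σ) ∧ R σ = r (2*σ) := by
    intro σ h0 h12
    have e : c01 (2*σ) = 2*σ := c01_eq (by linarith) (by linarith)
    constructor
    · show (if σ ≤ (1:ℝ)/2 then u (c01 (2*σ)) else u' (c01 (2*σ-1))) = u (2*σ)
      rw [if_pos h12, e]
    · show (if σ ≤ (1:ℝ)/2 then r (c01 (2*σ)) else r' (c01 (2*σ-1))) = r (2*σ)
      rw [if_pos h12, e]
  have hb2 : ∀ σ : ℝ, ¬(σ ≤ 1/2) → σ ≤ 1 → U σ = u' (2*σ-1) ∧ R σ = r' (2*σ-1) := by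
    intro σ h12 h1
    have h12' : (1:ℝ)/2 < σ := not_le.1 h12
    have e : c01 (2*σ-1) = 2*σ-1 := c01_eq (by linarith) (by linarith)
    constructor
    · show (if σ ≤ (1:ℝ)/2 then u (c01 (2*σ)) else u' (c01 (2*σ-1))) = u' (2*σ-1)
      rw [if_neg h12, e]
    · show (if σ ≤ (1:ℝ)/2 then r (c01 (2*σ)) else r' (c01 (2*σ-1))) = r' (2*σ-1)
      rw [if_neg h12, e]
  have hmem1 : ∀ σ : ℝ, 0 ≤ σ → σ ≤ 1/2 → ((U σ, R σ) : ℝ × ℝ) ∈ cGraph (-1) t y := by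
    intro σ h0 h12
    rw [(hb1 σ h0 h12).1, (hb1 σ h0 h12).2, ← hrep.surj]
    exact ⟨2*σ, ⟨by linarith, by linarith⟩, rfl⟩
  have hmem2 : ∀ σ : ℝ, ¬(σ ≤ 1/2) → σ ≤ 1 → ((U σ, R σ) : ℝ × ℝ) ∈ cGraph t (t+h) y := by
    intro σ h12 h1
    have h12' : (1:ℝ)/2 < σ := not_le.1 h12
    rw [(hb2 σ h12 h1).1, (hb2 σ h12 h1).2, ← hrep'.surj]
    exact ⟨2*σ-1, ⟨by linarith, by linarith⟩, rfl⟩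
  have himg1 : (fun s => (U s, R s)) '' Set.Icc 0 (1/2) = cGraph (-1) t y := by
    apply Set.Subset.antisymm
    · rintro p ⟨σ, hσ, rfl⟩
      exact hmem1 σ hσ.1 hσ.2
    · intro p hp
      rw [← hrep.surj] at hp
      obtain ⟨τ, hτ, rfl⟩ := hp
      refine ⟨τ/2, ⟨by linarith [hτ.1], by linarith [hτ.2]⟩, ?_⟩
      have e := hb1 (τ/2) (by linarith [hτ.1]) (by linarith [hτ.2])
      show (U (τ/2), R (τ/2)) = (u τ, r τ)
      rw [e.1, e.2]
      have e2 : 2*(τ/2) = τ := by ring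
      rw [e2]
  have himg2 : (fun s => (U s, R s)) '' Set.Icc (1/2) 1 = cGraph t (t+h) y := by
    apply Set.Subset.antisymm
    · rintro p ⟨σ, hσ, rfl⟩
      by_cases h12 : σ ≤ 1/2
      · have hσeq : σ = 1/2 := le_antisymm h12 hσ.1
        have e := hb1 σ (by linarith [hσ.1]) h12
        show ((U σ, R σ) : ℝ × ℝ) ∈ cGraph t (t+h) y
        rw [e.1, e.2, hσeq]
        have e2 : 2*((1:ℝ)/2) = 1 := by norm_num
        rw [e2, hu1, hr1]
        exact ⟨⟨le_rfl, by linarith⟩, by rw [leftVal, if_pos rfl]; exact right_mem_segment ℝ _ _⟩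
      · exact hmem2 σ h12 hσ.2
    · intro p hp
      rw [← hrep'.surj] at hp
      obtain ⟨τ, hτ, rfl⟩ := hp
      refine ⟨(τ+1)/2, ⟨by linarith [hτ.1], by linarith [hτ.2]⟩, ?_⟩
      rcases eq_or_lt_of_le hτ.1 with hτ0 | hτpos
      · subst hτ0
        have e := hb1 ((0+1)/2) (by norm_num) (by norm_num)
        show (U ((0+1)/2), R ((0+1)/2)) = (u' 0, r' 0)
        rw [e.1, e.2]
        have e2 : 2*(((0:ℝ)+1)/2) = 1 := by norm_num
        rw [e2, hu1, hr1, hu'0, hr'0]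
      · have h12 : ¬((τ+1)/2 ≤ 1/2) := by push_neg; linarith
        have e := hb2 ((τ+1)/2) h12 (by linarith [hτ.2])
        show (U ((τ+1)/2), R ((τ+1)/2)) = (u' τ, r' τ)
        rw [e.1, e.2]
        have e2 : 2*((τ+1)/2)-1 = τ := by ring
        rw [e2]
  refine ⟨?_, ?_, ?_, ?_⟩
  · have hcu : Continuous (fun σ : ℝ => u (c01 (2*σ))) :=
      hrep.cont_u.comp_continuous (continuous_c01.comp (continuous_const.mul continuous_id))
        (fun σ => c01_mem _)
    have hcu' : Continuous (fun σ : ℝ => u' (c01 (2*σ-1))) :=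
      hrep'.cont_u.comp_continuous
        (continuous_c01.comp ((continuous_const.mul continuous_id).sub continuous_const))
        (fun σ => c01_mem _)
    refine (Continuous.if_le hcu hcu' continuous_id continuous_const ?_).continuousOn
    intro σ hσ
    have hσ' : σ = (1:ℝ)/2 := hσ
    rw [hσ']
    have e1 : c01 (2*((1:ℝ)/2)) = 1 := by rw [c01_eq] <;> norm_num
    have e2 : c01 (2*((1:ℝ)/2)-1) = 0 := by rw [c01_eq] <;> norm_num
    rw [e1, e2, hu1, hu'0]
  · have hcr : Continuous (fun σ : ℝ => r (c01 (2*σ))) :=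
      hrep.cont_r.comp_continuous (continuous_c01.comp (continuous_const.mul continuous_id))
        (fun σ => c01_mem _)
    have hcr' : Continuous (fun σ : ℝ => r' (c01 (2*σ-1))) :=
      hrep'.cont_r.comp_continuous
        (continuous_c01.comp ((continuous_const.mul continuous_id).sub continuous_const))
        (fun σ => c01_mem _)
    refine (Continuous.if_le hcr hcr' continuous_id continuous_const ?_).continuousOn
    intro σ hσ
    have hσ' : σ = (1:ℝ)/2 := hσ
    rw [hσ']
    have e1 : c01 (2*((1:ℝ)/2)) = 1 := by rw [c01_eq] <;> norm_num
    have e2 : c01 (2*((1:ℝ)/2)-1) = 0 := by rw [c01_eq] <;> norm_num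
    rw [e1, e2, hr1, hr'0]
  · intro σ σ' hσ hσ' hle
    by_cases h12 : σ ≤ 1/2
    · by_cases h12' : σ' ≤ 1/2
      · have e := hb1 σ hσ.1 h12
        have e' := hb1 σ' hσ'.1 h12'
        have hg := hrep.mono (2*σ) (2*σ') ⟨by linarith [hσ.1], by linarith⟩
          ⟨by linarith [hσ'.1], by linarith⟩ (by linarith)
        show graphLE (-1) y (U σ, R σ) (U σ', R σ')
        rw [e.1, e.2, e'.1, e'.2]
        exact hg
      · have hp := hmem1 σ hσ.1 h12
        have hq := hmem2 σ' h12' hσ'.2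
        have hpt : R σ ≤ t := hp.1.2
        have hqt : t ≤ R σ' := hq.1.1
        rcases lt_or_eq_of_le (hpt.trans hqt) with hlt | heq2
        · exact Or.inl hlt
        · refine Or.inr ⟨heq2, ?_⟩
          show |U σ - leftVal (-1) y (R σ)| ≤ |U σ' - leftVal (-1) y (R σ')|
          have hRσt : R σ = t := le_antisymm hpt (by rw [heq2]; exact hqt)
          have hq1 : U σ' = y t := cGraph_left_endpoint hq (by rw [← heq2, hRσt])
          have hseg : U σ ∈ segment ℝ (leftVal (-1) y (R σ)) (y (R σ)) := hp.2
          rw [hRσt] at hseg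
          rw [← heq2, hRσt, hq1]
          exact segment_abs_le hseg
    · have h12' : ¬ (σ' ≤ 1/2) := fun hcon => h12 (le_trans hle hcon)
      have hp := hmem2 σ h12 hσ.2
      have hq := hmem2 σ' h12' hσ'.2
      have e := hb2 σ h12 hσ.2
      have e' := hb2 σ' h12' hσ'.2
      have hσ2 : (1:ℝ)/2 < σ := not_le.1 h12
      have hg : graphLE t y (U σ, R σ) (U σ', R σ') := by
        rw [e.1, e.2, e'.1, e'.2]
        exact hrep'.mono (2*σ-1) (2*σ'-1) ⟨by linarith, by linarith [hσ.2]⟩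
          ⟨by linarith [lt_of_lt_of_le hσ2 hle], by linarith [hσ'.2]⟩ (by linarith)
      exact graphLE_lift ht hp hq hg
  · have hIcc : Set.Icc (0:ℝ) 1 = Set.Icc 0 (1/2) ∪ Set.Icc (1/2) 1 :=
      (Set.Icc_union_Icc_eq_Icc (by norm_num) (by norm_num)).symm
    rw [hIcc, Set.image_union, himg1, himg2, cGraph_union ht (by linarith : t ≤ t + h)]

end Chunk5

section Chunk6

lemma m1DistOn_usc_right {y x : ℝ → ℝ} (ndy : NiceData y) (ndx : NiceData x) {t c ε : ℝ}
    (ht : 0 < t) (hc : c ∈ m1Set (-1) t y x) (hε : 0 < ε) :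
    ∃ h₀ > 0, ∀ h : ℝ, 0 < h → h ≤ h₀ → m1DistOn (-1) (t+h) y x ≤ c + 2*ε + h := by
  have hc0 : 0 ≤ c := m1Set_nonneg hc
  obtain ⟨u₁, r₁, u₂, r₂, h₁, h₂, hbd⟩ := hc
  have ht1 : (-1:ℝ) < t := by linarith
  obtain ⟨hy1, hyr1⟩ := rep_end ndy (by linarith) h₁
  obtain ⟨hx1, hxr1⟩ := rep_end ndx (by linarith) h₂
  obtain ⟨h₀y, hh₀y, hoscy⟩ := osc_lemma ndy (le_of_lt ht1) hε
  obtain ⟨h₀x, hh₀x, hoscx⟩ := osc_lemma ndx (le_of_lt ht1) hε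
  refine ⟨min h₀x h₀y, lt_min hh₀x hh₀y, ?_⟩
  intro h hh hhle
  obtain ⟨u₁', r₁', hrep₁', hu₁'0, hr₁'0, -, -⟩ :=
    ndy.exists_rep (le_of_lt ht1) (by linarith : t < t + h)
  obtain ⟨u₂', r₂', hrep₂', hu₂'0, hr₂'0, -, -⟩ :=
    ndx.exists_rep (le_of_lt ht1) (by linarith : t < t + h)
  have hg₁ := glue_rep ht1 hh h₁ hrep₁' hu₁'0 hr₁'0 hy1 hyr1
  have hg₂ := glue_rep ht1 hh h₂ hrep₂' hu₂'0 hr₂'0 hx1 hxr1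
  apply m1DistOn_le_of_mem
  refine ⟨_, _, _, _, hg₁, hg₂, ?_⟩
  intro σ hσ
  by_cases h12 : σ ≤ 1/2
  · have e : c01 (2*σ) = 2*σ := c01_eq (by linarith [hσ.1]) (by linarith)
    have hb := hbd (2*σ) ⟨by linarith [hσ.1], by linarith⟩
    constructor
    · rw [if_pos h12, if_pos h12, e]
      linarith [hb.1]
    · rw [if_pos h12, if_pos h12, e]
      linarith [hb.2]
  · have h12' : (1:ℝ)/2 < σ := not_le.1 h12
    have e : c01 (2*σ-1) = 2*σ-1 := c01_eq (by linarith) (by linarith [hσ.2])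
    have hmemy : ((u₁' (2*σ-1), r₁' (2*σ-1)) : ℝ×ℝ) ∈ cGraph t (t+h) y := by
      rw [← hrep₁'.surj]; exact ⟨2*σ-1, ⟨by linarith, by linarith [hσ.2]⟩, rfl⟩
    have hmemx : ((u₂' (2*σ-1), r₂' (2*σ-1)) : ℝ×ℝ) ∈ cGraph t (t+h) x := by
      rw [← hrep₂'.surj]; exact ⟨2*σ-1, ⟨by linarith, by linarith [hσ.2]⟩, rfl⟩
    have hoy : |u₁' (2*σ-1) - y t| ≤ ε :=
      hoscy h hh (hhle.trans (min_le_right _ _)) _ hmemy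
    have hox : |u₂' (2*σ-1) - x t| ≤ ε :=
      hoscx h hh (hhle.trans (min_le_left _ _)) _ hmemx
    have hxy : |y t - x t| ≤ c := by
      have hb := (hbd 1 ⟨zero_le_one, le_rfl⟩).1
      rw [hy1, hx1] at hb
      exact hb
    constructor
    · rw [if_neg h12, if_neg h12, e]
      have tri1 : |u₁' (2*σ-1) - u₂' (2*σ-1)| ≤ |u₁' (2*σ-1) - y t| + |y t - u₂' (2*σ-1)| :=
        abs_sub_le _ _ _
      have tri2 : |y t - u₂' (2*σ-1)| ≤ |y t - x t| + |x t - u₂' (2*σ-1)| := abs_sub_le _ _ _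
      have hox' : |x t - u₂' (2*σ-1)| ≤ ε := by rw [abs_sub_comm]; exact hox
      linarith
    · rw [if_neg h12, if_neg h12, e]
      have ht₁mem : r₁' (2*σ-1) ∈ Set.Icc t (t+h) := hmemy.1
      have ht₂mem : r₂' (2*σ-1) ∈ Set.Icc t (t+h) := hmemx.1
      have habs : |r₁' (2*σ-1) - r₂' (2*σ-1)| ≤ h :=
        abs_le.2 ⟨by linarith [ht₁mem.1, ht₂mem.2], by linarith [ht₁mem.2, ht₂mem.1]⟩
      linarith [hε.le]

lemma rightOpen_measurableSet {U : Set ℝ} (hU : ∀ t ∈ U, ∃ δ > 0, Set.Ioo t (t + δ) ⊆ U) :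
    MeasurableSet U := by
  choose! δ hδ hsub using hU
  set O := ⋃ t ∈ U, Set.Ioo t (t + δ t) with hO
  have hOopen : IsOpen O := isOpen_biUnion (fun t _ => isOpen_Ioo)
  have hOsub : O ⊆ U := by
    intro s hs
    obtain ⟨t, ht, hmem⟩ := Set.mem_iUnion₂.1 hs
    exact hsub t ht hmem
  have key : ∀ s ∈ U \ O, ∃ q : ℚ, (q:ℝ) ∈ Set.Ioo s (s + δ s) := by
    intro s hs
    obtain ⟨q, hq1, hq2⟩ := exists_rat_btwn (by linarith [hδ s hs.1] : s < s + δ s)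
    exact ⟨q, hq1, hq2⟩
  choose! q hq using key
  have hcnt : (U \ O).Countable := by
    apply Set.countable_of_injective_of_countable_image
      (f := fun s => ((q s : ℚ) : ℝ))
    · intro s hs s' hs' heq
      replace heq : ((q s : ℚ) : ℝ) = ((q s' : ℚ) : ℝ) := heq
      by_contra hne
      rcases lt_or_gt_of_ne hne with hlt | hlt
      · have h1 := hq s hs
        have h2 := hq s' hs'
        rw [heq] at h1
        have hsO : s' ∈ Set.Ioo s (s + δ s) := ⟨hlt, by linarith [h1.2, h2.1]⟩
        exact hs'.2 (Set.mem_biUnion hs.1 hsO)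
      · have h1 := hq s hs
        have h2 := hq s' hs'
        rw [heq] at h1
        have hsO : s ∈ Set.Ioo s' (s' + δ s') := ⟨hlt, by linarith [h1.1, h2.2]⟩
        exact hs.2 (Set.mem_biUnion hs'.1 hsO)
    · refine (Set.countable_range (fun q : ℚ => (q : ℝ))).mono ?_
      rintro _ ⟨s, -, rfl⟩
      exact ⟨q s, rfl⟩
  have hUeq : U = O ∪ (U \ O) := (Set.union_diff_cancel hOsub).symm
  rw [hUeq]
  exact hOopen.measurableSet.union hcnt.measurableSet

lemma integrand_measurable {y x : ℝ → ℝ} (ndy : NiceData y) (ndx : NiceData x) :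
    MeasureTheory.AEStronglyMeasurable
      (fun T => Real.exp (-T) * min (m1DistOn (-1) T y x) 1)
      (MeasureTheory.volume.restrict (Set.Ioi (0:ℝ))) := by
  set g : ℝ → ℝ :=
    fun T => if 0 < T then Real.exp (-T) * min (m1DistOn (-1) T y x) 1 else 0 with hgdef
  have hmeas : Measurable g := by
    apply measurable_of_Iio
    intro A
    have hdecomp : g ⁻¹' (Set.Iio A) =
        {T : ℝ | 0 < T ∧ Real.exp (-T) * min (m1DistOn (-1) T y x) 1 < A} ∪
        (if 0 < A then Set.Iic (0:ℝ) else ∅) := by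
      ext T
      simp only [Set.mem_preimage, Set.mem_Iio, hgdef, Set.mem_union, Set.mem_setOf_eq]
      by_cases hT : 0 < T
      · simp only [if_pos hT, Set.mem_Iic]
        constructor
        · intro hlt; exact Or.inl ⟨hT, hlt⟩
        · rintro (⟨-, hlt⟩ | hmem)
          · exact hlt
          · split_ifs at hmem with hA
            · exfalso; exact absurd hmem (not_le.2 hT)
            · exact absurd hmem (Set.notMem_empty T)
      · simp only [if_neg hT, Set.mem_Iic]
        constructor
        · intro hA
          refine Or.inr ?_
          rw [if_pos hA]
          exact le_of_not_gt hT
        · rintro (⟨hT', -⟩ | hmem)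
          · exact absurd hT' hT
          · split_ifs at hmem with hA
            · exact hA
            · exact absurd hmem (Set.notMem_empty T)
    rw [hdecomp]
    apply MeasurableSet.union
    · apply rightOpen_measurableSet
      rintro T ⟨hT, hlt⟩
      have hD0 : 0 ≤ m1DistOn (-1) T y x := m1DistOn_nonneg ndy ndx (by linarith)
      set D := fun T : ℝ => m1DistOn (-1) T y x with hDdef
      set w := Real.exp (-T) * min (D T) 1 with hwdef
      set κ := A - w with hκdef
      have hκpos : 0 < κ := by rw [hκdef]; simp only [hwdef]; linarith
      have hne := m1Set_nonempty ndy ndx (show (-1:ℝ) < T by linarith)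
      obtain ⟨c, hcmem, hclt⟩ := exists_lt_of_m1DistOn_lt hne
        (show m1DistOn (-1) T y x < D T + κ/8 by simp only [hDdef]; linarith)
      obtain ⟨h₀, hh₀, husc⟩ := m1DistOn_usc_right ndy ndx hT hcmem
        (show (0:ℝ) < κ/8 by linarith)
      refine ⟨min h₀ (κ/8), lt_min hh₀ (by linarith), ?_⟩
      rintro s ⟨hs1, hs2⟩
      have hs0 : 0 < s := by linarith
      refine ⟨hs0, ?_⟩
      have hDs : D s ≤ c + 2*(κ/8) + (s - T) := by
        have h7 := husc (s - T) (by linarith)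
          (by have := min_le_left h₀ (κ/8); linarith)
        have e : T + (s - T) = s := by ring
        rw [e] at h7
        exact h7
      have hcD : D T ≤ c := m1DistOn_le_of_mem hcmem
      have hsT : s - T ≤ κ/8 := by
        have := min_le_right h₀ (κ/8); linarith
      have hmin : min (D s) 1 ≤ min (D T) 1 + κ/2 := by
        have h1 : min (D s) 1 ≤ D T + κ/2 :=
          le_trans (min_le_left _ _) (by linarith)
        have h2 : min (D s) 1 ≤ 1 := min_le_right _ _
        rcases le_total (D T) 1 with h3 | h3
        · rw [min_eq_left h3]; linarith
        · rw [min_eq_right h3]; linarith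
      have hexp : Real.exp (-s) ≤ Real.exp (-T) := Real.exp_le_exp.2 (by linarith)
      have hexp1 : Real.exp (-T) ≤ 1 := Real.exp_le_one_iff.2 (by linarith)
      have hmin0 : 0 ≤ min (D s) 1 :=
        le_min (m1DistOn_nonneg ndy ndx (by linarith)) zero_le_one
      have hmin1 : 0 ≤ min (D T) 1 + κ/2 := by
        have := le_min hD0 zero_le_one
        simp only [hDdef] at this ⊢
        linarith
      have hstep : Real.exp (-s) * min (D s) 1 ≤ Real.exp (-T) * (min (D T) 1 + κ/2) :=
        mul_le_mul hexp hmin hmin0 (Real.exp_nonneg _)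
      have hstep2 : Real.exp (-T) * (min (D T) 1 + κ/2) = w + Real.exp (-T) * (κ/2) := by
        rw [hwdef]; ring
      have hstep3 : Real.exp (-T) * (κ/2) ≤ κ/2 :=
        mul_le_of_le_one_left (by linarith) hexp1
      show Real.exp (-s) * min (D s) 1 < A
      have : Real.exp (-s) * min (D s) 1 ≤ w + κ/2 := by
        rw [hstep2] at hstep; linarith
      have hκA : w + κ = A := by rw [hκdef]; ring
      linarith
    · split_ifs
      · exact measurableSet_Iic
      · exact MeasurableSet.empty
  refine hmeas.aestronglyMeasurable.congr ?_
  refine Filter.eventuallyEq_of_mem (MeasureTheory.self_mem_ae_restrict measurableSet_Ioi) ?_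
  intro T hT
  have hT' : (0:ℝ) < T := hT
  simp only [hgdef, if_pos hT']

end Chunk6

section Chunk7

lemma m1Dist_lower_bound {y x : ℝ → ℝ} (ndy : NiceData y) (ndx : NiceData x)
    {T₀ ε : ℝ} (hT₀ : 0 < T₀) (hε : 0 < ε)
    (hD : ∀ T, T₀ ≤ T → ε ≤ m1DistOn (-1) T y x) :
    min ε 1 * Real.exp (-T₀) ≤ m1Dist y x := by
  have hexpint : MeasureTheory.IntegrableOn (fun T : ℝ => Real.exp (-T)) (Set.Ioi 0) := by
    have := exp_neg_integrableOn_Ioi 0 (by norm_num : (0:ℝ) < 1)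
    simpa using this
  have hint : MeasureTheory.IntegrableOn
      (fun T => Real.exp (-T) * min (m1DistOn (-1) T y x) 1) (Set.Ioi 0) := by
    refine MeasureTheory.Integrable.mono' hexpint (integrand_measurable ndy ndx) ?_
    refine (MeasureTheory.ae_restrict_iff' measurableSet_Ioi).2 (Filter.Eventually.of_forall ?_)
    intro T hT
    have hT' : (0:ℝ) < T := hT
    rw [Real.norm_eq_abs, abs_mul, abs_of_nonneg (Real.exp_nonneg _)]
    have h1 : 0 ≤ min (m1DistOn (-1) T y x) 1 :=
      le_min (m1DistOn_nonneg ndy ndx (by linarith)) zero_le_one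
    rw [abs_of_nonneg h1]
    have h2 : min (m1DistOn (-1) T y x) 1 ≤ 1 := min_le_right _ _
    nlinarith [Real.exp_nonneg (-T)]
  set φ : ℝ → ℝ := Set.indicator (Set.Ici T₀) (fun T => min ε 1 * Real.exp (-T)) with hφdef
  have hφint : MeasureTheory.IntegrableOn φ (Set.Ioi 0) := by
    rw [hφdef]
    exact (hexpint.const_mul (min ε 1)).indicator measurableSet_Ici
  have hmono : ∀ T ∈ Set.Ioi (0:ℝ), φ T ≤ Real.exp (-T) * min (m1DistOn (-1) T y x) 1 := by
    intro T hT
    have hT' : (0:ℝ) < T := hT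
    rw [hφdef]
    by_cases hmem : T ∈ Set.Ici T₀
    · rw [Set.indicator_of_mem hmem]
      have hD1 := hD T hmem
      have hmin : min ε 1 ≤ min (m1DistOn (-1) T y x) 1 :=
        min_le_min hD1 le_rfl
      have := mul_le_mul_of_nonneg_left hmin (Real.exp_nonneg (-T))
      linarith [this]
    · rw [Set.indicator_of_notMem hmem]
      have h1 : 0 ≤ min (m1DistOn (-1) T y x) 1 :=
        le_min (m1DistOn_nonneg ndy ndx (by linarith)) zero_le_one
      positivity
  have hle := MeasureTheory.setIntegral_mono_on hφint hint measurableSet_Ioi hmono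
  have hcalc : ∫ T in Set.Ioi (0:ℝ), φ T = min ε 1 * Real.exp (-T₀) := by
    rw [hφdef, MeasureTheory.setIntegral_indicator measurableSet_Ici]
    have hinter : Set.Ioi (0:ℝ) ∩ Set.Ici T₀ = Set.Ici T₀ :=
      Set.inter_eq_self_of_subset_right (fun s hs => lt_of_lt_of_le hT₀ hs)
    rw [hinter, MeasureTheory.integral_Ici_eq_integral_Ioi,
      MeasureTheory.integral_const_mul, integral_exp_neg_Ioi]
  rw [m1Dist, ← hcalc]
  exact hle

lemma exists_upper {x : ℝ → ℝ} {t : ℝ} (ht : 0 ≤ t) (hlt : ENNReal.ofReal t < hitTime x) :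
    ∃ t', t < t' ∧ ∀ s, 0 ≤ s → s ≤ t' → 0 < x s := by
  rcases eq_or_ne (hitTime x) ⊤ with hfin | hfin
  · exact ⟨t+1, by linarith, fun s hs _ =>
      pos_of_lt_hitTime hs (by rw [hfin]; exact ENNReal.ofReal_lt_top)⟩
  · set τr := (hitTime x).toReal with hτr
    have hofeq : hitTime x = ENNReal.ofReal τr := (ENNReal.ofReal_toReal hfin).symm
    have htτ : t < τr := by
      rw [hofeq] at hlt
      by_contra hcon; push_neg at hcon
      exact absurd hlt (not_lt.2 (ENNReal.ofReal_le_ofReal hcon))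
    refine ⟨(t + τr)/2, by linarith, ?_⟩
    intro s hs hs2
    apply pos_of_lt_hitTime hs
    rw [hofeq, ENNReal.ofReal_lt_ofReal_iff (by linarith)]
    linarith

lemma lbA {x : ℝ → ℝ} (ndx : NiceData x) {t : ℝ} (ht0 : 0 ≤ t)
    (hlt : ENNReal.ofReal t < hitTime x) :
    ∃ ε > 0, ∃ T₀ > 0, ∀ y : ℝ → ℝ, NiceData y →
      hitTime y ≤ ENNReal.ofReal t → ∀ T, T₀ ≤ T → ε ≤ m1DistOn (-1) T y x := by
  obtain ⟨t', htt', hpos⟩ := exists_upper ht0 hlt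
  have hx0 : 0 < x 0 := hpos 0 le_rfl (by linarith)
  have hfc := ndx.hf 0 (by norm_num)
  rw [Metric.continuousWithinAt_iff] at hfc
  obtain ⟨δf, hδf, hballf⟩ := hfc (x 0) hx0
  set η := min (δf/2) (1/2) with hηdef
  have hηpos : 0 < η := lt_min (by linarith) (by norm_num)
  have hη2 : η ≤ 1/2 := min_le_right _ _
  have hη3 : η ≤ δf/2 := min_le_left _ _
  have hposneg : ∀ s, -η ≤ s → s < 0 → 0 < x s := by
    intro s h1 h2
    have hs1 : (-1:ℝ) ≤ s := by linarith
    have hxs : x s = ndx.f s - ndx.M s := ndx.hfx s hs1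
    have hMz : ndx.M s = 0 := ndx.hM0 s h2
    have hf0 : x 0 = ndx.f 0 - ndx.M 0 := ndx.hfx 0 (by norm_num)
    have hd : dist s 0 < δf := by
      rw [Real.dist_eq, sub_zero, abs_of_nonpos h2.le]; linarith
    have hb := hballf (hs1 : s ∈ Set.Ici (-1:ℝ)) hd
    rw [Real.dist_eq] at hb
    rcases abs_lt.1 hb with ⟨hb1, -⟩
    have hM0nn := ndx.hMnn 0
    rw [hxs, hMz]
    linarith
  have hposall : ∀ s ∈ Set.Icc (-η) t', 0 < x s := by
    intro s hs
    rcases lt_or_ge s 0 with h | h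
    · exact hposneg s hs.1 h
    · exact hpos s h hs.2
  obtain ⟨δ₀, hδ₀, hlb⟩ := ndx.exists_pos_lb (by linarith : (-1:ℝ) ≤ -η) (by linarith) hposall
  set γ := min η (t' - t) with hγdef
  have hγpos : 0 < γ := lt_min hηpos (by linarith)
  have hγη : γ ≤ η := min_le_left _ _
  have hγt : γ ≤ t' - t := min_le_right _ _
  refine ⟨min δ₀ γ / 2, by positivity, t', by linarith, ?_⟩
  intro y ndy hhit T hT
  apply m1DistOn_ge (m1Set_nonempty ndy ndx (by linarith : (-1:ℝ) < T))
  intro c hcmem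
  by_contra hcon; push_neg at hcon
  have hc0 : 0 ≤ c := m1Set_nonneg hcmem
  obtain ⟨s, hs0, hys, hsle⟩ := hitTime_exists ht0 hhit (show (0:ℝ) < γ/2 by linarith)
  obtain ⟨u₁, r₁, u₂, r₂, h₁, h₂, hbd⟩ := hcmem
  have hpt : ((y s, s) : ℝ×ℝ) ∈ cGraph (-1) T y :=
    ⟨⟨by linarith, by linarith⟩, right_mem_segment ℝ _ _⟩
  rw [← h₁.surj] at hpt
  obtain ⟨σ, hσ, hσeq⟩ := hpt
  have hu1 : u₁ σ = y s := congrArg Prod.fst hσeq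
  have hr1 : r₁ σ = s := congrArg Prod.snd hσeq
  have hb := hbd σ hσ
  rcases abs_le.1 hb.1 with ⟨hb1, hb2⟩
  rcases abs_le.1 hb.2 with ⟨hb3, hb4⟩
  rw [hu1] at hb1 hb2
  rw [hr1] at hb3 hb4
  have hx2 : ((u₂ σ, r₂ σ) : ℝ×ℝ) ∈ cGraph (-1) T x := by
    rw [← h₂.surj]; exact ⟨σ, hσ, rfl⟩
  have hmd : min δ₀ γ ≤ δ₀ := min_le_left _ _
  have hmg : min δ₀ γ ≤ γ := min_le_right _ _
  have hρmem : r₂ σ ∈ Set.Icc (-η) t' := by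
    constructor
    · linarith
    · linarith
  have hxρ : δ₀ ≤ x (r₂ σ) := hlb _ hρmem
  have hseg2 : u₂ σ ∈ segment ℝ (leftVal (-1) x (r₂ σ)) (x (r₂ σ)) := hx2.2
  have hge := ndx.segment_ge (le_refl (-1)) (by linarith [hρmem.1] : (-1:ℝ) ≤ r₂ σ) hseg2
  linarith

lemma lbB {x : ℝ → ℝ} (ndx : NiceData x) (hcross : CrossingProp x) {t : ℝ} (ht0 : 0 ≤ t)
    (hτ : hitTime x ≤ ENNReal.ofReal t) (hne : (hitTime x).toReal ≠ t) :
    ∃ ε > 0, ∃ T₀ > 0, ∀ y : ℝ → ℝ, NiceData y →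
      ¬(hitTime y ≤ ENNReal.ofReal t) → ∀ T, T₀ ≤ T → ε ≤ m1DistOn (-1) T y x := by
  have hfin : hitTime x ≠ ⊤ := ne_top_of_le_ne_top ENNReal.ofReal_ne_top hτ
  set τr := (hitTime x).toReal with hτrdef
  have hτr0 : (0:ℝ) ≤ τr := ENNReal.toReal_nonneg
  have hτrt : τr ≤ t := by
    have h5 := ENNReal.toReal_mono ENNReal.ofReal_ne_top hτ
    rwa [ENNReal.toReal_ofReal ht0] at h5
  have hτrlt : τr < t := lt_of_le_of_ne hτrt hne
  set h := (t - τr)/2 with hhdef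
  have hh : 0 < h := by rw [hhdef]; linarith
  obtain ⟨s₀, hs₀mem, hcr⟩ := hcross hfin h hh
  have hxτ : x τr ≤ 0 := ndx.x_hit_nonpos hfin
  have hxq : x (τr + s₀) < 0 := by linarith
  have hs₀pos : 0 < s₀ := by
    rcases eq_or_lt_of_le hs₀mem.1 with h0 | h0
    · exfalso; rw [← h0] at hcr; simp at hcr
    · exact h0
  set δ₁ := -x (τr + s₀) with hδ₁def
  have hδ₁pos : 0 < δ₁ := by rw [hδ₁def]; linarith
  set ε := min δ₁ (min s₀ h) / 2 with hεdef
  have hεpos : 0 < ε := by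
    have := lt_min hδ₁pos (lt_min hs₀pos hh)
    rw [hεdef]; linarith
  refine ⟨ε, hεpos, max t 1, lt_of_lt_of_le one_pos (le_max_right _ _), ?_⟩
  intro y ndy hmiss T hT
  have hTt : t ≤ T := le_trans (le_max_left _ _) hT
  apply m1DistOn_ge (m1Set_nonempty ndy ndx (by linarith : (-1:ℝ) < T))
  intro c hcmem
  by_contra hcon; push_neg at hcon
  have hc0 : 0 ≤ c := m1Set_nonneg hcmem
  obtain ⟨u₁, r₁, u₂, r₂, h₁, h₂, hbd⟩ := hcmem
  set q := τr + s₀ with hqdef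
  have hqt : q ≤ τr + h := by rw [hqdef]; linarith [hs₀mem.2]
  have hth : τr + 2*h = t := by rw [hhdef]; ring
  have hpt : ((x q, q) : ℝ×ℝ) ∈ cGraph (-1) T x :=
    ⟨⟨by linarith, by linarith⟩, right_mem_segment ℝ _ _⟩
  rw [← h₂.surj] at hpt
  obtain ⟨σ, hσ, hσeq⟩ := hpt
  have hu2 : u₂ σ = x q := congrArg Prod.fst hσeq
  have hr2 : r₂ σ = q := congrArg Prod.snd hσeq
  have hb := hbd σ hσ
  rcases abs_le.1 hb.1 with ⟨hb1, hb2⟩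
  rcases abs_le.1 hb.2 with ⟨hb3, hb4⟩
  rw [hu2] at hb1 hb2
  rw [hr2] at hb3 hb4
  have hy1 : ((u₁ σ, r₁ σ) : ℝ×ℝ) ∈ cGraph (-1) T y := by
    rw [← h₁.surj]; exact ⟨σ, hσ, rfl⟩
  have hεs : min δ₁ (min s₀ h) ≤ s₀ := le_trans (min_le_right _ _) (min_le_left _ _)
  have hεh : min δ₁ (min s₀ h) ≤ h := le_trans (min_le_right _ _) (min_le_right _ _)
  have hεδ : min δ₁ (min s₀ h) ≤ δ₁ := min_le_left _ _
  have hr1mem : 0 ≤ r₁ σ ∧ r₁ σ ≤ t := by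
    constructor
    · linarith
    · linarith
  have hsegy : u₁ σ ∈ segment ℝ (leftVal (-1) y (r₁ σ)) (y (r₁ σ)) := hy1.2
  have hgey := ndy.segment_ge (le_refl (-1)) (by linarith [hr1mem.1] : (-1:ℝ) ≤ r₁ σ) hsegy
  have hyneg : y (r₁ σ) ≤ 0 := by
    have hxqval : x q = -δ₁ := by rw [hδ₁def, hqdef]; ring
    rw [hxqval] at hb2
    linarith
  exact hmiss (le_trans (hitTime_le' hr1mem.1 hyneg) (ENNReal.ofReal_le_ofReal hr1mem.2))

lemma mk_niceData (G : ℝ → ℝ) (hGcont : ContinuousOn G (Set.Icc (-1:ℝ) 1))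
    (hGmono : MonotoneOn G (Set.Icc (-1:ℝ) 1)) (hG0 : G 0 = 0) {x : ℝ → ℝ}
    (hx : ∃ f ℓ : ℝ → ℝ, ContinuousOn f (Set.Ici (-1:ℝ)) ∧ MemM ℓ ∧
      x = fun t => f t - G (ℓ t)) : Nonempty (NiceData x) := by
  obtain ⟨f, ℓ, hf, hℓ, hxeq⟩ := hx
  set ℓt : ℝ → ℝ := fun u => ℓ (max u (-1)) with hℓtdef
  have hℓmem : ∀ v, -1 ≤ v → ℓ v ∈ Set.Icc (0:ℝ) 1 := by
    intro v hv
    constructor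
    · rcases lt_or_ge v 0 with hv0 | hv0
      · rw [hℓ.zero_on_neg v hv hv0]
      · have h0 := hℓ.zero_on_neg (-1/2) (by norm_num) (by norm_num)
        have h1 := hℓ.mono (show (-1/2:ℝ) ∈ Set.Ici (-1:ℝ) by norm_num)
          (show v ∈ Set.Ici (-1:ℝ) from hv) (by linarith)
        rw [h0] at h1
        exact h1
    · exact hℓ.le_one v hv
  have hℓtmem : ∀ u, ℓt u ∈ Set.Icc (0:ℝ) 1 := fun u => hℓmem _ (le_max_right _ _)
  have hℓtmono : Monotone ℓt := by
    intro u v huv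
    exact hℓ.mono (Set.mem_Ici.2 (le_max_right _ _)) (Set.mem_Ici.2 (le_max_right _ _)) (max_le_max huv le_rfl)
  have hsub : ∀ u, ℓt u ∈ Set.Icc (-1:ℝ) 1 := fun u => ⟨by linarith [(hℓtmem u).1], (hℓtmem u).2⟩
  set M : ℝ → ℝ := fun u => G (ℓt u) with hMdef
  have hℓt0 : ∀ u, u < 0 → ℓt u = 0 := by
    intro u hu
    show ℓ (max u (-1)) = 0
    exact hℓ.zero_on_neg _ (le_max_right _ _) (max_lt hu (by norm_num))
  refine ⟨⟨f, M, hf, ?_, ?_, ?_, ?_, ?_⟩⟩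
  · intro u v huv
    exact hGmono (hsub u) (hsub v) (hℓtmono huv)
  · intro s
    rcases lt_or_ge s 0 with hs | hs
    · have hconst : Set.EqOn M (fun _ => G 0) (Set.Iio (0:ℝ)) := by
        intro u hu
        show G (ℓt u) = G 0
        rw [hℓt0 u hu]
      refine ContinuousWithinAt.congr_of_eventuallyEq
        (continuousWithinAt_const (b := G 0)) ?_ (hconst hs)
      exact Filter.eventuallyEq_of_mem (mem_nhdsWithin_of_mem_nhds (Iio_mem_nhds hs)) hconst
    · have heq : ∀ u ∈ Set.Ici s, ℓt u = ℓ u := by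
        intro u hu
        have hu' : s ≤ u := hu
        show ℓ (max u (-1)) = ℓ u
        rw [max_eq_left (by linarith : (-1:ℝ) ≤ u)]
      have hc1 : ContinuousWithinAt ℓ (Set.Ici s) s := hℓ.right_cont s (by linarith)
      have hℓs := hℓmem s (by linarith)
      have hc2 : ContinuousWithinAt (fun u => G (ℓ u)) (Set.Ici s) s := by
        refine ContinuousWithinAt.comp (hGcont _ ⟨by linarith [hℓs.1], hℓs.2⟩) hc1 ?_
        intro u hu
        have hu' : (-1:ℝ) ≤ u := by
          have : s ≤ u := hu
          linarith
        have := hℓmem u hu'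
        exact ⟨by linarith [this.1], this.2⟩
      refine hc2.congr ?_ ?_
      · intro u hu
        show G (ℓt u) = G (ℓ u)
        rw [heq u hu]
      · show G (ℓt s) = G (ℓ s)
        rw [heq s Set.self_mem_Ici]
  · intro s hs
    show G (ℓt s) = 0
    rw [hℓt0 s hs, hG0]
  · intro s
    have h7 := hGmono (show (0:ℝ) ∈ Set.Icc (-1:ℝ) 1 by norm_num) (hsub s) (hℓtmem s).1
    rw [hG0] at h7
    exact h7
  · intro s hs
    rw [hxeq]
    show f s - G (ℓ s) = f s - G (ℓt s)
    have : ℓt s = ℓ s := by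
      show ℓ (max s (-1)) = ℓ s
      rw [max_eq_left hs]
    rw [this]

end Chunk7

/-- Lemma 4.1 (ii): if `x ∈ ι(Ξ)` satisfies the crossing property, then
for any sequence in `ι(Ξ)` converging to `x` in the M1 topology, the hitting-time indicators
`λ_t` converge for all `t ≥ 0` outside a countable set. -/
theorem stmt11 (G : ℝ → ℝ)
    (hGcont : ContinuousOn G (Set.Icc (-1 : ℝ) 1))
    (hGmono : MonotoneOn G (Set.Icc (-1 : ℝ) 1)) (hG0 : G 0 = 0)
    (x : ℝ → ℝ)
    (hx : ∃ (f : ℝ → ℝ) (ℓ : ℝ → ℝ), ContinuousOn f (Set.Ici (-1 : ℝ)) ∧ MemM ℓ ∧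
      x = fun t => f t - G (ℓ t))
    (hcross : CrossingProp x)
    (xn : ℕ → ℝ → ℝ)
    (hxn : ∀ n, ∃ (f : ℝ → ℝ) (ℓ : ℝ → ℝ), ContinuousOn f (Set.Ici (-1 : ℝ)) ∧ MemM ℓ ∧
      xn n = fun t => f t - G (ℓ t))
    (hconv : Filter.Tendsto (fun n => m1Dist (xn n) x) Filter.atTop (nhds 0)) :
    ∃ S : Set ℝ, S ⊆ Set.Ici (0 : ℝ) ∧ (Set.Ici (0 : ℝ) \ S).Countable ∧
      ∀ t ∈ S, Filter.Tendsto (fun n => lamT t (xn n)) Filter.atTop (nhds (lamT t x)) := by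
  obtain ⟨ndx⟩ := mk_niceData G hGcont hGmono hG0 hx
  have hndn : ∀ n, Nonempty (NiceData (xn n)) := fun n => mk_niceData G hGcont hGmono hG0 (hxn n)
  set ndxn : ∀ n, NiceData (xn n) := fun n => (hndn n).some with hndxndef
  refine ⟨Set.Ici 0 \ {(hitTime x).toReal}, Set.diff_subset, ?_, ?_⟩
  · have hsub : Set.Ici (0:ℝ) \ (Set.Ici 0 \ {(hitTime x).toReal}) ⊆ {(hitTime x).toReal} := by
      intro s hs
      rcases hs with ⟨hs1, hs2⟩
      by_contra hne
      exact hs2 ⟨hs1, hne⟩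
    exact Set.Countable.mono hsub (Set.countable_singleton _)
  · rintro t ⟨ht0, htne⟩
    have ht0' : (0:ℝ) ≤ t := ht0
    by_cases hcase : hitTime x ≤ ENNReal.ofReal t
    · obtain ⟨ε, hε, T₀, hT₀, hkey⟩ := lbB ndx hcross ht0' hcase
        (fun hc => htne (Set.mem_singleton_iff.2 hc.symm))
      have hCpos : 0 < min ε 1 * Real.exp (-T₀) :=
        mul_pos (lt_min hε one_pos) (Real.exp_pos _)
      have hev : ∀ᶠ n in Filter.atTop, m1Dist (xn n) x < min ε 1 * Real.exp (-T₀) :=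
        hconv.eventually (gt_mem_nhds hCpos)
      have heq : ∀ᶠ n in Filter.atTop, lamT t (xn n) = lamT t x := by
        filter_upwards [hev] with n hn
        have hhit : hitTime (xn n) ≤ ENNReal.ofReal t := by
          by_contra hmiss
          have := m1Dist_lower_bound (ndxn n) ndx hT₀ hε
            (fun T hT => hkey (xn n) (ndxn n) hmiss T hT)
          linarith
        rw [lamT, lamT, if_pos hhit, if_pos hcase]
      exact (tendsto_const_nhds :
        Filter.Tendsto (fun _ : ℕ => lamT t x) Filter.atTop (nhds (lamT t x))).congr'
        (by filter_upwards [heq] with n hn; exact hn.symm)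
    · obtain ⟨ε, hε, T₀, hT₀, hkey⟩ := lbA ndx ht0' (not_le.1 hcase)
      have hCpos : 0 < min ε 1 * Real.exp (-T₀) :=
        mul_pos (lt_min hε one_pos) (Real.exp_pos _)
      have hev : ∀ᶠ n in Filter.atTop, m1Dist (xn n) x < min ε 1 * Real.exp (-T₀) :=
        hconv.eventually (gt_mem_nhds hCpos)
      have heq : ∀ᶠ n in Filter.atTop, lamT t (xn n) = lamT t x := by
        filter_upwards [hev] with n hn
        have hhit : ¬ (hitTime (xn n) ≤ ENNReal.ofReal t) := by
          intro hmem
          have := m1Dist_lower_bound (ndxn n) ndx hT₀ hε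
            (fun T hT => hkey (xn n) (ndxn n) hmem T hT)
          linarith
        rw [lamT, lamT, if_neg hhit, if_neg hcase]
      exact (tendsto_const_nhds :
        Filter.Tendsto (fun _ : ℕ => lamT t x) Filter.atTop (nhds (lamT t x))).congr'
        (by filter_upwards [heq] with n hn; exact hn.symm)

end
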